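/- arXiv:1401.6220 — 9 statements merged into one kernel-verified Lean document; each statement's English description precedes it below -/
import Mathlib

section
/- Let τ > 0, a ∈ ℝ, n ∈ ℕ, and let u, g : ℝ → ℝ be measurable functions such that for almost every θ ∈ [a, a+τ] one has Σ_{i=0}^{n} u(θ + iτ) = g(θ). Then ∫_a^{a+(n+1)τ} u(t)² dt ≥ (1/(n+1)) · ∫_a^{a+τ} g(θ)² dθ, where both integrals are Lebesgue integrals of nonnegative functions with values in [0, ∞]. -/
open MeasureTheory
open scoped ENNReal

private lemma split_lintegral (τ a : ℝ) (hτ : 0 < τ) (f : ℝ → ℝ≥0∞) (hf : Measurable f) :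
    ∀ m : ℕ, (∫⁻ t in Set.Ico a (a + m * τ), f t) =
      ∑ i ∈ Finset.range m, ∫⁻ t in Set.Ico (a + i * τ) (a + (i + 1) * τ), f t := by
  intro m
  induction m with
  | zero => simp
  | succ m ih =>
    have h1 : a ≤ a + m * τ := by nlinarith [Nat.cast_nonneg (α := ℝ) m]
    have h2 : a + m * τ ≤ a + (m + 1) * τ := by nlinarith
    have hunion : Set.Ico a (a + (m + 1) * τ) =
        Set.Ico a (a + m * τ) ∪ Set.Ico (a + m * τ) (a + (m + 1) * τ) :=
      (Set.Ico_union_Ico_eq_Ico h1 h2).symm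
    rw [show ((m + 1 : ℕ) : ℝ) = (m : ℝ) + 1 by push_cast; ring] at *
    rw [hunion, lintegral_union measurableSet_Ico (by rw [Set.Ico_disjoint_Ico]; exact (min_le_left _ _).trans (le_max_right _ _)),
      ih, Finset.sum_range_succ]

private lemma translate_lintegral (τ a : ℝ) (i : ℕ) (f : ℝ → ℝ≥0∞) (hf : Measurable f) :
    (∫⁻ t in Set.Ico (a + i * τ) (a + (i + 1) * τ), f t) =
      ∫⁻ θ in Set.Ico a (a + τ), f (θ + i * τ) := by
  have h := (measurePreserving_add_right volume ((i : ℝ) * τ)).setLIntegral_comp_emb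
    (measurableEmbedding_addRight _) f (Set.Ico a (a + τ))
  rw [Set.image_add_const_Ico] at h
  rw [show a + ((i : ℝ) + 1) * τ = a + τ + i * τ from by ring]
  exact h.symm

/-- Core optimization lemma underlying Theorem 1: if the sums of `u` over a τ-grid of
`n+1` points are prescribed a.e. on `[a, a+τ]` by `g`, then the squared L² norm of `u`
over `[a, a+(n+1)τ]` is at least `1/(n+1)` times the squared L² norm of `g` over one
period. -/
theorem sum_constraint_sq_integral_lower_bound
    (τ a : ℝ) (hτ : 0 < τ) (n : ℕ) (u g : ℝ → ℝ)
    (hu : Measurable u) (hg : Measurable g)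
    (hsum : ∀ᵐ θ ∂(volume.restrict (Set.Icc a (a + τ))),
      (∑ i ∈ Finset.range (n + 1), u (θ + i * τ)) = g θ) :
    (∫⁻ t in Set.Icc a (a + (n + 1) * τ), ENNReal.ofReal (u t ^ 2)) ≥
      (((n : ℝ≥0∞) + 1))⁻¹ * ∫⁻ θ in Set.Icc a (a + τ), ENNReal.ofReal (g θ ^ 2) := by
  have hfm : Measurable fun t => ENNReal.ofReal (u t ^ 2) :=
    (hu.pow_const 2).ennreal_ofReal
  -- rewrite LHS integral as sum of translated integrals
  have key : (∫⁻ t in Set.Icc a (a + (n + 1) * τ), ENNReal.ofReal (u t ^ 2)) =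
      ∫⁻ θ in Set.Ico a (a + τ),
        ∑ i ∈ Finset.range (n + 1), ENNReal.ofReal (u (θ + i * τ) ^ 2) := by
    rw [← restrict_Ico_eq_restrict_Icc]
    rw [show ((n : ℝ) + 1) = ((n + 1 : ℕ) : ℝ) by push_cast; ring]
    rw [split_lintegral τ a hτ _ hfm (n + 1)]
    calc ∑ i ∈ Finset.range (n + 1),
          ∫⁻ t in Set.Ico (a + i * τ) (a + (i + 1) * τ), ENNReal.ofReal (u t ^ 2)
        = ∑ i ∈ Finset.range (n + 1),
          ∫⁻ θ in Set.Ico a (a + τ), ENNReal.ofReal (u (θ + i * τ) ^ 2) :=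
          Finset.sum_congr rfl fun i _ => translate_lintegral τ a i _ hfm
      _ = _ := (lintegral_finset_sum _ fun i _ =>
          ((hu.comp (measurable_add_const _)).pow_const 2).ennreal_ofReal).symm
  -- pointwise Cauchy-Schwarz bound a.e.
  have hsum' : ∀ᵐ θ ∂(volume.restrict (Set.Ico a (a + τ))),
      (∑ i ∈ Finset.range (n + 1), u (θ + i * τ)) = g θ := by
    rwa [restrict_Ico_eq_restrict_Icc]
  have hbound : (∫⁻ θ in Set.Icc a (a + τ), ENNReal.ofReal (g θ ^ 2)) ≤
      ((n : ℝ≥0∞) + 1) *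
        ∫⁻ θ in Set.Ico a (a + τ),
          ∑ i ∈ Finset.range (n + 1), ENNReal.ofReal (u (θ + i * τ) ^ 2) := by
    rw [← restrict_Ico_eq_restrict_Icc, ← lintegral_const_mul _ (by
      exact Finset.measurable_sum _ fun i _ =>
        ((hu.comp (measurable_add_const _)).pow_const 2).ennreal_ofReal)]
    refine lintegral_mono_ae (hsum'.mono fun θ hθ => ?_)
    rw [← hθ]
    calc ENNReal.ofReal ((∑ i ∈ Finset.range (n + 1), u (θ + i * τ)) ^ 2)
        ≤ ENNReal.ofReal (((n : ℝ) + 1) *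
            ∑ i ∈ Finset.range (n + 1), u (θ + i * τ) ^ 2) := by
          refine ENNReal.ofReal_le_ofReal ?_
          have := sq_sum_le_card_mul_sum_sq (s := Finset.range (n + 1))
            (f := fun i => u (θ + i * τ))
          simpa [Finset.card_range] using this
      _ = ((n : ℝ≥0∞) + 1) * ∑ i ∈ Finset.range (n + 1),
            ENNReal.ofReal (u (θ + i * τ) ^ 2) := by
          rw [ENNReal.ofReal_mul (by positivity),
            ENNReal.ofReal_sum_of_nonneg (fun i _ => sq_nonneg _)]
          congr 1
          rw [show ((n : ℝ) + 1) = ((n + 1 : ℕ) : ℝ) by push_cast; ring,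
            ENNReal.ofReal_natCast]
          push_cast; ring
  rw [key, ge_iff_le]
  have hne : ((n : ℝ≥0∞) + 1) ≠ 0 := by simp
  have hnetop : ((n : ℝ≥0∞) + 1) ≠ ⊤ := by
    simp [ENNReal.add_eq_top, ENNReal.natCast_ne_top]
  calc ((n : ℝ≥0∞) + 1)⁻¹ * ∫⁻ θ in Set.Icc a (a + τ), ENNReal.ofReal (g θ ^ 2)
      ≤ ((n : ℝ≥0∞) + 1)⁻¹ * (((n : ℝ≥0∞) + 1) *
          ∫⁻ θ in Set.Ico a (a + τ),
            ∑ i ∈ Finset.range (n + 1), ENNReal.ofReal (u (θ + i * τ) ^ 2)) :=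
        mul_le_mul_right hbound _
    _ = _ := by rw [← mul_assoc, ENNReal.inv_mul_cancel hne hnetop, one_mul]
end

section
/- For every candidate trajectory x, J(x*) ≤ J(x); that is, the Gluskabi raccordation x* minimizes the persistence cost J(x) = ∫_a^{b+τ} (x(t) − x(t−τ))² dt over all measurable functions agreeing with x^a on (−∞, a] and with x^b on [b, ∞). (Theorem 1 of the paper.) -/
open MeasureTheory
open scoped ENNReal

private lemma lintegral_Ioc_shift (g : ℝ → ℝ≥0∞) (u v c : ℝ) :
    ∫⁻ s in Set.Ioc u v, g (s + c) = ∫⁻ t in Set.Ioc (u + c) (v + c), g t := by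
  have h := (measurePreserving_add_right (volume : Measure ℝ) c).setLIntegral_comp_emb
    (MeasurableEquiv.addRight c).measurableEmbedding g (Set.Ioc u v)
  simpa [Set.image_add_const_Ioc] using h

private lemma lintegral_Ioc_decomp (g : ℝ → ℝ≥0∞) (a τ : ℝ) (hτ : 0 < τ) (m : ℕ) :
    ∫⁻ t in Set.Ioc a (a + m * τ), g t
      = ∑ k ∈ Finset.range m, ∫⁻ s in Set.Ioc a (a + τ), g (s + k * τ) := by
  induction m with
  | zero => simp
  | succ m ih =>
    have h1 : a ≤ a + m * τ := by nlinarith [Nat.cast_nonneg (α := ℝ) m]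
    have h2 : a + m * τ ≤ a + (m + 1 : ℕ) * τ := by push_cast; nlinarith
    rw [← Set.Ioc_union_Ioc_eq_Ioc h1 h2, lintegral_union measurableSet_Ioc
      (Set.Ioc_disjoint_Ioc_of_le le_rfl), ih, Finset.sum_range_succ]
    congr 1
    rw [lintegral_Ioc_shift g a (a + τ) ((m : ℝ) * τ)]
    congr 1
    push_cast
    ring

private lemma per_iter {τ : ℝ} {f : ℝ → ℝ} (hf : ∀ t, f (t + τ) = f t) (s : ℝ) :
    ∀ m : ℕ, f (s + m * τ) = f s := by
  intro m
  induction m with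
  | zero => simp
  | succ m ih =>
    have h : s + ((m : ℝ) + 1) * τ = (s + m * τ) + τ := by ring
    push_cast
    rw [h, hf, ih]

/-- Theorem 1 of the paper: the Gluskabi raccordation `xstar` minimizes the persistence
cost `J x = ∫_a^{b+τ} (x t - x (t-τ))² dt` over all measurable candidate trajectories
agreeing with the τ-periodic `xa` on `(-∞, a]` and with the τ-periodic `xb` on `[b, ∞)`,
where `b = a + n τ`. -/
theorem gluskabi_raccordation_minimizes
    (τ a b : ℝ) (hτ : 0 < τ) (n : ℕ) (hn : 1 ≤ n) (hb : b = a + n * τ)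
    (xa xb : ℝ → ℝ) (hxa : Continuous xa) (hxb : Continuous xb)
    (hxa_per : ∀ t, xa (t + τ) = xa t) (hxb_per : ∀ t, xb (t + τ) = xb t)
    (xstar : ℝ → ℝ)
    (hxstar_a : ∀ t, t ≤ a → xstar t = xa t)
    (hxstar_mid : ∀ t, a < t → t < b →
      xstar t = xa t + (1 + (⌊(t - a) / τ⌋ : ℝ)) * (xb t - xa t) / (n + 1))
    (hxstar_b : ∀ t, b ≤ t → xstar t = xb t)
    (x : ℝ → ℝ) (hx : Measurable x)
    (hx_a : ∀ t, t ≤ a → x t = xa t) (hx_b : ∀ t, b ≤ t → x t = xb t) :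
    (∫⁻ t in Set.Ioc a (b + τ), ENNReal.ofReal ((xstar t - xstar (t - τ)) ^ 2)) ≤
      ∫⁻ t in Set.Ioc a (b + τ), ENNReal.ofReal ((x t - x (t - τ)) ^ 2) := by
  have hn1 : (0:ℝ) < (n:ℝ) + 1 := by positivity
  -- xstar is measurable
  have hxstar_eq : xstar = fun t => if t ≤ a then xa t else if t < b then
      xa t + (1 + (⌊(t - a) / τ⌋ : ℝ)) * (xb t - xa t) / (n + 1) else xb t := by
    funext t
    by_cases h1 : t ≤ a
    · simp [h1, hxstar_a t h1]
    · by_cases h2 : t < b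
      · simp [h1, h2, hxstar_mid t (lt_of_not_ge h1) h2]
      · simp [h1, h2, hxstar_b t (le_of_not_gt h2)]
  have hfloor_meas : Measurable fun t : ℝ => ((⌊(t - a) / τ⌋ : ℤ) : ℝ) :=
    measurable_from_top.comp (((measurable_id.sub_const a).div_const τ).floor)
  have hxstar_meas : Measurable xstar := by
    rw [hxstar_eq]
    refine Measurable.ite (measurableSet_Iic (a := a)) hxa.measurable
      (Measurable.ite (measurableSet_Iio (a := b)) ?_ hxb.measurable)
    exact (hxa.measurable.add (((measurable_const.add hfloor_meas).mul
      (hxb.measurable.sub hxa.measurable)).div_const _))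
  have hGs : Measurable fun t => ENNReal.ofReal ((xstar t - xstar (t - τ)) ^ 2) := by
    exact ((hxstar_meas.sub (hxstar_meas.comp (measurable_id.sub_const τ))).pow_const
      2).ennreal_ofReal
  have hG : Measurable fun t => ENNReal.ofReal ((x t - x (t - τ)) ^ 2) := by
    exact ((hx.sub (hx.comp (measurable_id.sub_const τ))).pow_const 2).ennreal_ofReal
  have hbτ : b + τ = a + ((n + 1 : ℕ) : ℝ) * τ := by push_cast; rw [hb]; ring
  rw [hbτ,
    lintegral_Ioc_decomp (fun t => ENNReal.ofReal ((xstar t - xstar (t - τ)) ^ 2)) a τ hτ (n+1),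
    lintegral_Ioc_decomp (fun t => ENNReal.ofReal ((x t - x (t - τ)) ^ 2)) a τ hτ (n+1),
    ]
  have hsum1 := lintegral_finset_sum (μ := volume.restrict (Set.Ioc a (a + τ)))
    (Finset.range (n+1))
    (f := fun (k : ℕ) (s : ℝ) =>
      ENNReal.ofReal ((xstar (s + (k:ℝ) * τ) - xstar (s + (k:ℝ) * τ - τ)) ^ 2))
    (fun k _ => hGs.comp (measurable_id.add_const _))
  have hsum2 := lintegral_finset_sum (μ := volume.restrict (Set.Ioc a (a + τ)))
    (Finset.range (n+1))
    (f := fun (k : ℕ) (s : ℝ) =>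
      ENNReal.ofReal ((x (s + (k:ℝ) * τ) - x (s + (k:ℝ) * τ - τ)) ^ 2))
    (fun k _ => hG.comp (measurable_id.add_const _))
  rw [← hsum1, ← hsum2]
  rw [setLIntegral_congr (Ioo_ae_eq_Ioc (a := a) (b := a + τ) (μ := volume)).symm,
    setLIntegral_congr (Ioo_ae_eq_Ioc (a := a) (b := a + τ) (μ := volume)).symm]
  refine setLIntegral_mono' measurableSet_Ioo fun s hs => ?_
  obtain ⟨hs1, hs2⟩ := hs
  have hxa_iter := per_iter hxa_per s
  have hxb_iter := per_iter hxb_per s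
  set A := xa s with hA
  set B := xb s with hB
  -- values of xstar along the orbit of s
  have hstar : ∀ k : ℕ, k ≤ n + 1 → xstar (s + k * τ - τ) = A + k * ((B - A) / (n + 1)) := by
    intro k hk
    rcases Nat.eq_zero_or_pos k with h0 | h1
    · subst h0
      have h' : s + ((0:ℕ):ℝ) * τ - τ = s - τ := by push_cast; ring
      have hper : xa s = xa (s - τ) := by
        have := hxa_per (s - τ)
        rw [show s - τ + τ = s from by ring] at this
        exact this
      rw [h', hxstar_a _ (by linarith : s - τ ≤ a), ← hper, hA]
      push_cast
      ring
    · rcases eq_or_lt_of_le hk with hk1 | hk1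
      · subst hk1
        have harg : s + ((n + 1 : ℕ) : ℝ) * τ - τ = s + (n : ℕ) * τ := by push_cast; ring
        have hge : b ≤ s + ((n + 1 : ℕ) : ℝ) * τ - τ := by
          rw [harg, hb]; push_cast; linarith
        rw [hxstar_b _ hge, harg, hxb_iter]
        push_cast
        field_simp
        ring
      · -- 1 ≤ k ≤ n
        have hkn : k ≤ n := by omega
        have hk1R : (1:ℝ) ≤ (k:ℝ) := by exact_mod_cast h1
        have hknR : (k:ℝ) ≤ (n:ℝ) := by exact_mod_cast hkn
        have ht1 : a < s + (k:ℝ) * τ - τ := by nlinarith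
        have ht2 : s + (k:ℝ) * τ - τ < b := by rw [hb]; nlinarith
        rw [hxstar_mid _ ht1 ht2]
        have hfl : ⌊(s + (k:ℝ) * τ - τ - a) / τ⌋ = (k : ℤ) - 1 := by
          rw [Int.floor_eq_iff]
          constructor
          · push_cast
            rw [le_div_iff₀ hτ]
            nlinarith
          · push_cast
            rw [div_lt_iff₀ hτ]
            nlinarith
        have harg : s + (k:ℝ) * τ - τ = s + ((k - 1 : ℕ) : ℝ) * τ := by
          rw [Nat.cast_sub h1]; push_cast; ring
        rw [hfl, harg, hxa_iter, hxb_iter]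
        push_cast
        ring
  -- rewrite both sums as ofReal of a real sum
  rw [← ENNReal.ofReal_sum_of_nonneg (fun i _ => sq_nonneg _),
    ← ENNReal.ofReal_sum_of_nonneg (fun i _ => sq_nonneg _)]
  refine ENNReal.ofReal_le_ofReal ?_
  -- left sum is constant
  have hL : ∀ k ∈ Finset.range (n+1),
      (xstar (s + (k:ℝ) * τ) - xstar (s + (k:ℝ) * τ - τ)) ^ 2 = ((B - A) / (n + 1)) ^ 2 := by
    intro k hk
    have hkmem : k ≤ n := Nat.lt_succ_iff.mp (Finset.mem_range.mp hk)
    have e1 : xstar (s + (k:ℝ) * τ) = A + ((k+1 : ℕ) : ℝ) * ((B - A) / (n + 1)) := by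
      rw [show s + (k:ℝ) * τ = s + ((k+1 : ℕ) : ℝ) * τ - τ from by push_cast; ring]
      exact hstar (k+1) (by omega)
    rw [e1, hstar k (by omega)]
    push_cast
    ring
  rw [Finset.sum_congr rfl hL, Finset.sum_const, Finset.card_range, nsmul_eq_mul]
  -- right sum: telescoping + Cauchy–Schwarz
  set w : ℕ → ℝ := fun k => x (s + (k:ℝ) * τ - τ) with hw
  have hR : ∀ k ∈ Finset.range (n+1),
      (x (s + (k:ℝ) * τ) - x (s + (k:ℝ) * τ - τ)) ^ 2 = (w (k+1) - w k) ^ 2 := by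
    intro k _
    have harg : s + (k:ℝ) * τ = s + ((k+1 : ℕ) : ℝ) * τ - τ := by push_cast; ring
    rw [hw]
    simp only []
    rw [harg]
  have hw0 : w 0 = A := by
    have h' : s + ((0:ℕ):ℝ) * τ - τ = s - τ := by push_cast; ring
    have hper : xa s = xa (s - τ) := by
      have := hxa_per (s - τ)
      rw [show s - τ + τ = s from by ring] at this
      exact this
    rw [hw]
    simp only []
    rw [h', hx_a _ (by linarith : s - τ ≤ a), ← hper, hA]
  have hwn : w (n+1) = B := by
    have harg : s + ((n + 1 : ℕ) : ℝ) * τ - τ = s + (n : ℕ) * τ := by push_cast; ring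
    have hge : b ≤ s + ((n + 1 : ℕ) : ℝ) * τ - τ := by rw [harg, hb]; push_cast; linarith
    rw [hw]
    simp only []
    rw [hx_b _ hge, harg, hxb_iter]
  have htel : ∑ k ∈ Finset.range (n+1), (w (k+1) - w k) = B - A := by
    rw [Finset.sum_range_sub w, hw0, hwn]
  have hCS := sq_sum_le_card_mul_sum_sq (s := Finset.range (n+1))
    (f := fun k => w (k+1) - w k)
  rw [htel, Finset.card_range] at hCS
  rw [Finset.sum_congr rfl hR]
  have hcast : ((n+1 : ℕ) : ℝ) = (n:ℝ) + 1 := by push_cast; ring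
  rw [hcast] at hCS ⊢
  have h2 : ((n:ℝ)+1) * (((B-A) / ((n:ℝ)+1))^2) = (B-A)^2 / ((n:ℝ)+1) := by
    field_simp
  rw [h2, div_le_iff₀ hn1]
  nlinarith [hCS]
end

section
/- The minimal persistence cost equals J(x*) = (1/(n+1)) · ∫_a^{a+τ} (x^b(θ) − x^a(θ))² dθ. -/
open MeasureTheory
open scoped ENNReal

/-- The minimal persistence cost of Theorem 1:
`J(x*) = (1/(n+1)) ∫_a^{a+τ} (x^b θ - x^a θ)² dθ`. -/
theorem gluskabi_raccordation_cost
    (τ a b : ℝ) (hτ : 0 < τ) (n : ℕ) (hn : 1 ≤ n) (hb : b = a + n * τ)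
    (xa xb : ℝ → ℝ) (hxa : Continuous xa) (hxb : Continuous xb)
    (hxa_per : ∀ t, xa (t + τ) = xa t) (hxb_per : ∀ t, xb (t + τ) = xb t)
    (xstar : ℝ → ℝ)
    (hxstar_a : ∀ t, t ≤ a → xstar t = xa t)
    (hxstar_mid : ∀ t, a < t → t < b →
      xstar t = xa t + (1 + (⌊(t - a) / τ⌋ : ℝ)) * (xb t - xa t) / (n + 1))
    (hxstar_b : ∀ t, b ≤ t → xstar t = xb t) :
    (∫⁻ t in Set.Ioc a (b + τ), ENNReal.ofReal ((xstar t - xstar (t - τ)) ^ 2)) =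
      (((n : ℝ≥0∞) + 1))⁻¹ *
        ∫⁻ θ in Set.Ioc a (a + τ), ENNReal.ofReal ((xb θ - xa θ) ^ 2) := by
  set d : ℝ → ℝ := fun t => xb t - xa t with hd
  have hdc : Continuous d := hxb.sub hxa
  have hd_per : ∀ t, d (t + τ) = d t := fun t => by simp [hd, hxa_per, hxb_per]
  have hd_per' : ∀ t, d (t - τ) = d t := fun t => by
    have := hd_per (t - τ); simp at this; exact this.symm
  have hxa_per' : ∀ t, xa (t - τ) = xa t := fun t => by
    have := hxa_per (t - τ); simp at this; exact this.symm
  have hxb_per' : ∀ t, xb (t - τ) = xb t := fun t => by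
    have := hxb_per (t - τ); simp at this; exact this.symm
  have hc0 : (0:ℝ) < (n:ℝ) + 1 := by positivity
  set S : Set ℝ := (fun k : ℕ => a + k * τ) '' (Set.Iic (n + 1)) with hS
  have hSfin : S.Finite := (Set.finite_Iic (n + 1)).image _
  -- pointwise identity off S
  have key : ∀ t ∈ Set.Ioc a (b + τ), t ∉ S →
      xstar t - xstar (t - τ) = d t / ((n:ℝ) + 1) := by
    rintro t ⟨hta, htb⟩ htS
    have htnot : ∀ k : ℕ, k ≤ n + 1 → t ≠ a + k * τ := by
      intro k hk hkt
      exact htS ⟨k, hk, hkt.symm⟩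
    set k : ℤ := ⌊(t - a) / τ⌋ with hk
    have hfl : (k : ℝ) ≤ (t - a) / τ := Int.floor_le _
    have hfu : (t - a) / τ < k + 1 := Int.lt_floor_add_one _
    have hk0 : 0 ≤ k := by
      apply Int.floor_nonneg.2
      exact div_nonneg (by linarith) hτ.le
    have hkle : k ≤ n := by
      by_contra h
      push_neg at h
      have hkn : (n : ℤ) + 1 ≤ k := by omega
      have h1 : ((n:ℝ) + 1) ≤ (t - a) / τ := le_trans (by exact_mod_cast hkn) hfl
      have h2 : (t - a) / τ ≤ (n:ℝ) + 1 := by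
        rw [div_le_iff₀ hτ]
        have : t ≤ a + ((n:ℝ)+1) * τ := by rw [hb] at htb; linarith
        linarith
      have : (t - a) / τ = (n:ℝ) + 1 := le_antisymm h2 h1
      have : t = a + ((n:ℕ)+1 : ℕ) * τ := by
        push_cast
        field_simp at this
        linarith
      exact htnot (n+1) le_rfl this
    -- strict lower bound : a + k τ < t
    have hlow : a + (k:ℝ) * τ < t := by
      have h1 : a + (k:ℝ) * τ ≤ t := by
        have := (le_div_iff₀ hτ).1 hfl
        linarith
      rcases lt_or_eq_of_le h1 with h | h
      · exact h
      · exfalso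
        obtain ⟨m, hm⟩ : ∃ m : ℕ, (k:ℤ) = m := ⟨k.toNat, (Int.toNat_of_nonneg hk0).symm⟩
        refine htnot m (by omega) ?_
        rw [← h, hm]; push_cast; ring
    have hhigh : t < a + ((k:ℝ) + 1) * τ := by
      have := (div_lt_iff₀ hτ).1 hfu
      linarith
    -- floor at t - τ
    have hfl2 : ⌊(t - τ - a) / τ⌋ = k - 1 := by
      have : (t - τ - a) / τ = (t - a) / τ - (1:ℤ) := by
        push_cast; field_simp; ring
      rw [this, Int.floor_sub_intCast]
    rcases eq_or_lt_of_le hk0 with hk0' | hkpos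
    · -- k = 0 : a < t < a + τ
      have hkc : (k:ℝ) = 0 := by exact_mod_cast hk0'.symm
      have ht1 : t < a + τ := by rw [hkc] at hhigh; linarith
      have htb' : t < b := by
        rw [hb]
        have : (1:ℝ) ≤ (n:ℝ) := by exact_mod_cast hn
        nlinarith
      have hmid := hxstar_mid t hta htb'
      rw [← hk, hkc] at hmid
      have hprev : xstar (t - τ) = xa t := by
        rw [hxstar_a (t - τ) (by linarith), hxa_per']
      rw [hmid, hprev, hd]
      ring
    · rcases eq_or_lt_of_le hkle with hkn' | hklt
      · -- k = n : b < t < b + τ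
        have hkc : (k:ℝ) = n := by exact_mod_cast hkn'
        have hbt : b < t := by rw [hb, ← hkc]; exact hlow
        have hprev_mem1 : a < t - τ := by
          have : (1:ℝ) ≤ (k:ℝ) := by exact_mod_cast hkpos
          nlinarith
        have hprev_mem2 : t - τ < b := by
          rw [hb, ← hkc]; linarith
        have hmid := hxstar_mid (t - τ) hprev_mem1 hprev_mem2
        rw [hfl2] at hmid
        have hcast : ((k - 1 : ℤ) : ℝ) = (n:ℝ) - 1 := by push_cast; rw [hkc]
        rw [hcast] at hmid
        rw [hxstar_b t hbt.le, hmid, hxa_per', hxb_per']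
        have hne : (n:ℝ) + 1 ≠ 0 := ne_of_gt hc0
        field_simp [hd]
        ring
      · -- 0 < k < n : both in mid
        have hkc1 : (1:ℝ) ≤ (k:ℝ) := by exact_mod_cast hkpos
        have hkcn : (k:ℝ) + 1 ≤ (n:ℝ) := by exact_mod_cast hklt
        have htb' : t < b := by rw [hb]; nlinarith
        have hmid1 := hxstar_mid t hta htb'
        rw [← hk] at hmid1
        have hprev_mem1 : a < t - τ := by nlinarith
        have hprev_mem2 : t - τ < b := by rw [hb]; nlinarith
        have hmid2 := hxstar_mid (t - τ) hprev_mem1 hprev_mem2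
        rw [hfl2] at hmid2
        have hcast : ((k - 1 : ℤ) : ℝ) = (k:ℝ) - 1 := by push_cast; ring
        rw [hcast] at hmid2
        rw [hmid1, hmid2, hxa_per', hxb_per']
        have hne : (n:ℝ) + 1 ≠ 0 := ne_of_gt hc0
        field_simp [hd]
        ring
  -- replace integrand a.e.
  have hS0 : volume S = 0 := hSfin.measure_zero _
  have hae : (fun t => ENNReal.ofReal ((xstar t - xstar (t - τ)) ^ 2))
      =ᵐ[volume.restrict (Set.Ioc a (b + τ))]
      (fun t => ENNReal.ofReal ((d t / ((n:ℝ)+1)) ^ 2)) := by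
    have h1 : ∀ᵐ t ∂(volume.restrict (Set.Ioc a (b+τ))), t ∉ S :=
      ae_restrict_of_ae (measure_eq_zero_iff_ae_notMem.1 hS0)
    have h2 : ∀ᵐ t ∂(volume.restrict (Set.Ioc a (b+τ))), t ∈ Set.Ioc a (b+τ) :=
      ae_restrict_mem measurableSet_Ioc
    filter_upwards [h1, h2] with t h1 h2
    rw [key t h2 h1]
  rw [lintegral_congr_ae hae]
  -- now pure computation
  have hab : a ≤ b + τ := by
    rw [hb]
    have : (0:ℝ) ≤ (n:ℝ) := n.cast_nonneg
    nlinarith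
  have haa : a ≤ a + τ := by linarith
  have hg : Continuous (fun t => d t ^ 2) := hdc.pow 2
  have hg_per : Function.Periodic (fun t => d t ^ 2) τ := fun t => by
    simp only []; rw [hd_per]
  have h_int : ∀ t₁ t₂ : ℝ, IntervalIntegrable (fun t => d t ^ 2) volume t₁ t₂ :=
    fun t₁ t₂ => hg.intervalIntegrable t₁ t₂
  set R : ℝ := ∫ t in Set.Ioc a (a + τ), d t ^ 2 with hR
  have hR_nonneg : 0 ≤ R :=
    setIntegral_nonneg measurableSet_Ioc (fun t _ => sq_nonneg _)
  have hbig : (∫ t in Set.Ioc a (b + τ), d t ^ 2) = ((n:ℝ) + 1) * R := by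
    have h1 : (∫ t in Set.Ioc a (b + τ), d t ^ 2) = ∫ t in a..(b+τ), d t ^ 2 :=
      (intervalIntegral.integral_of_le hab).symm
    have h2 : R = ∫ t in a..(a+τ), d t ^ 2 :=
      (intervalIntegral.integral_of_le haa).symm
    have h3 : b + τ = a + ((n:ℤ)+1) • τ := by
      rw [hb, zsmul_eq_mul]; push_cast; ring
    rw [h1, h2, h3, hg_per.intervalIntegral_add_zsmul_eq ((n:ℤ)+1) a h_int,
      zsmul_eq_mul]
    congr 1
    push_cast
    ring
  -- convert lintegrals to ofReal of integrals
  have hconv : ∀ (u v : ℝ), u ≤ v →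
      (∫⁻ t in Set.Ioc u v, ENNReal.ofReal ((d t / ((n:ℝ)+1)) ^ 2))
        = ENNReal.ofReal (∫ t in Set.Ioc u v, (d t / ((n:ℝ)+1)) ^ 2) := by
    intro u v huv
    refine (ofReal_integral_eq_lintegral_ofReal ?_ ?_).symm
    · exact ((hdc.div_const _).pow 2).integrableOn_Ioc
    · exact Filter.Eventually.of_forall fun t => sq_nonneg _
  have hconv2 :
      (∫⁻ θ in Set.Ioc a (a + τ), ENNReal.ofReal ((xb θ - xa θ) ^ 2))
        = ENNReal.ofReal R := by
    refine (ofReal_integral_eq_lintegral_ofReal ?_ ?_).symm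
    · exact hg.integrableOn_Ioc
    · exact Filter.Eventually.of_forall fun t => sq_nonneg _
  rw [hconv a (b+τ) hab, hconv2]
  have hleft : (∫ t in Set.Ioc a (b + τ), (d t / ((n:ℝ)+1)) ^ 2)
      = (((n:ℝ) + 1))⁻¹ * R := by
    have : (∫ t in Set.Ioc a (b + τ), (d t / ((n:ℝ)+1)) ^ 2)
        = (((n:ℝ)+1)^2)⁻¹ * ∫ t in Set.Ioc a (b + τ), d t ^ 2 := by
      rw [← integral_const_mul]
      congr 1 with t
      field_simp
    rw [this, hbig]
    field_simp
  rw [hleft]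
  rw [ENNReal.ofReal_mul (by positivity)]
  congr 1
  rw [ENNReal.ofReal_inv_of_pos hc0]
  congr 1
  rw [← ENNReal.ofReal_one, ← ENNReal.ofReal_natCast n, ← ENNReal.ofReal_add (by positivity) zero_le_one]
end

section
/- For every t ∈ (a, b+τ) that is not of the form a + iτ for an integer i, the Gluskabi raccordation satisfies x*(t) − x*(t−τ) = (x^b(t) − x^a(t))/(n+1); moreover x*(t) − x*(t−τ) = 0 for all t ≤ a and all t > b+τ. (The optimal control profile u of Theorem 1.) -/
open MeasureTheory
open scoped ENNReal

/-- The optimal control profile of Theorem 1: away from the grid points `a + iτ`, the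
Gluskabi raccordation satisfies `x*(t) - x*(t-τ) = (x^b(t) - x^a(t))/(n+1)` on
`(a, b+τ)`, and `x*(t) - x*(t-τ) = 0` for `t ≤ a` and for `t > b+τ`. -/
theorem gluskabi_raccordation_control_profile
    (τ a b : ℝ) (hτ : 0 < τ) (n : ℕ) (hn : 1 ≤ n) (hb : b = a + n * τ)
    (xa xb : ℝ → ℝ) (hxa : Continuous xa) (hxb : Continuous xb)
    (hxa_per : ∀ t, xa (t + τ) = xa t) (hxb_per : ∀ t, xb (t + τ) = xb t)
    (xstar : ℝ → ℝ)
    (hxstar_a : ∀ t, t ≤ a → xstar t = xa t)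
    (hxstar_mid : ∀ t, a < t → t < b →
      xstar t = xa t + (1 + (⌊(t - a) / τ⌋ : ℝ)) * (xb t - xa t) / (n + 1))
    (hxstar_b : ∀ t, b ≤ t → xstar t = xb t) :
    (∀ t, a < t → t < b + τ → (∀ i : ℤ, t ≠ a + i * τ) →
        xstar t - xstar (t - τ) = (xb t - xa t) / (n + 1)) ∧
      (∀ t, t ≤ a → xstar t - xstar (t - τ) = 0) ∧
      (∀ t, b + τ < t → xstar t - xstar (t - τ) = 0) := by
  have hn1 : (0:ℝ) < (n:ℝ) + 1 := by positivity
  have hnτ : τ ≤ (n:ℝ) * τ := by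
    have : (1:ℝ) ≤ (n:ℝ) := by exact_mod_cast hn
    nlinarith
  have hpa : ∀ t : ℝ, xa (t - τ) = xa t := by
    intro t
    have h := hxa_per (t - τ)
    rw [sub_add_cancel] at h
    exact h.symm
  have hpb : ∀ t : ℝ, xb (t - τ) = xb t := by
    intro t
    have h := hxb_per (t - τ)
    rw [sub_add_cancel] at h
    exact h.symm
  refine ⟨?_, ?_, ?_⟩
  · intro t hta htb hne
    by_cases h1 : t < b
    · by_cases h2 : a < t - τ
      · rw [hxstar_mid t hta h1, hxstar_mid (t - τ) h2 (by linarith)]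
        have hfl : ⌊(t - τ - a) / τ⌋ = ⌊(t - a) / τ⌋ - 1 := by
          have h : (t - τ - a) / τ = (t - a) / τ - 1 := by field_simp; ring
          rw [h]
          exact_mod_cast Int.floor_sub_intCast ((t - a) / τ) 1
        rw [hpa, hpb, hfl]
        push_cast
        field_simp
        ring
      · have hlt : t < a + τ := by
          rcases lt_or_eq_of_le (not_lt.mp h2) with h | h
          · linarith
          · exact absurd (by rw [← h]; push_cast; ring) (hne 1)
        rw [hxstar_mid t hta h1, hxstar_a (t - τ) (not_lt.mp h2)]
        have hfl : ⌊(t - a) / τ⌋ = 0 := by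
          rw [Int.floor_eq_zero_iff]
          constructor
          · exact div_nonneg (by linarith) hτ.le
          · rw [div_lt_one hτ]; linarith
        rw [hpa, hfl]
        push_cast
        field_simp
        ring
    · have hbt : b < t := by
        rcases lt_or_eq_of_le (not_lt.mp h1) with h | h
        · exact h
        · exact absurd (by rw [← h, hb]; push_cast; ring) (hne n)
      have h2 : a < t - τ := by linarith
      have h3 : t - τ < b := by linarith
      rw [hxstar_b t hbt.le, hxstar_mid (t - τ) h2 h3]
      have hfl : ⌊(t - τ - a) / τ⌋ = (n : ℤ) - 1 := by
        rw [Int.floor_eq_iff]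
        constructor
        · push_cast
          rw [le_div_iff₀ hτ]
          rw [hb] at hbt
          nlinarith
        · push_cast
          rw [div_lt_iff₀ hτ]
          rw [hb] at h3
          nlinarith
      rw [hpa, hpb, hfl]
      push_cast
      field_simp
      ring
  · intro t ht
    rw [hxstar_a t ht, hxstar_a (t - τ) (by linarith), hpa]
    ring
  · intro t ht
    rw [hxstar_b t (by linarith), hxstar_b (t - τ) (by linarith), hpb]
    ring
end

section
/- If a candidate trajectory x satisfies J(x) = J(x*), i.e., x achieves the minimal persistence cost, then x(t) = x*(t) for almost every t ∈ ℝ. (Uniqueness of the Gluskabi raccordation of Theorem 1 up to null sets.) -/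
open MeasureTheory
open scoped ENNReal

lemma shiftIoc (f : ℝ → ℝ≥0∞) (hf : Measurable f) (c u v : ℝ) :
    ∫⁻ t in Set.Ioc (u + c) (v + c), f t = ∫⁻ s in Set.Ioc u v, f (s + c) := by
  have h1 : ∫⁻ t in Set.Ioc (u + c) (v + c), f t
      = ∫⁻ t in Set.Ioc (u + c) (v + c), f t ∂(Measure.map (· + c) volume) := by
    rw [map_add_right_eq_self]
  rw [h1, setLIntegral_map measurableSet_Ioc hf (measurable_add_const c),
    Set.preimage_add_const_Ioc]
  congr 2 <;> ring

lemma decompIoc (f : ℝ → ℝ≥0∞) (hf : Measurable f) (a τ : ℝ) (hτ : 0 < τ) (m : ℕ) :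
    ∫⁻ t in Set.Ioc a (a + (m + 1 : ℕ) * τ), f t
      = ∑ k ∈ Finset.range (m + 1), ∫⁻ s in Set.Ioc a (a + τ), f (s + k * τ) := by
  induction m with
  | zero =>
    have : a + (0 + 1 : ℕ) * τ = a + τ := by push_cast; ring
    rw [this, Finset.sum_range_one]
    refine lintegral_congr fun s => ?_
    norm_num
  | succ m ih =>
    have h1 : a ≤ a + (m + 1 : ℕ) * τ := by
      have : (0:ℝ) ≤ (m + 1 : ℕ) * τ := by positivity
      linarith
    have h2 : a + (m + 1 : ℕ) * τ ≤ a + (m + 2 : ℕ) * τ := by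
      push_cast; nlinarith
    have hsplit : Set.Ioc a (a + (m + 2 : ℕ) * τ)
        = Set.Ioc a (a + (m + 1 : ℕ) * τ) ∪ Set.Ioc (a + (m + 1 : ℕ) * τ) (a + (m + 2 : ℕ) * τ) :=
      (Set.Ioc_union_Ioc_eq_Ioc h1 h2).symm
    have hdisj : Disjoint (Set.Ioc a (a + (m + 1 : ℕ) * τ))
        (Set.Ioc (a + (m + 1 : ℕ) * τ) (a + (m + 2 : ℕ) * τ)) := by
      exact Set.Ioc_disjoint_Ioc_of_le le_rfl
    have htr : ∫⁻ t in Set.Ioc (a + (m + 1 : ℕ) * τ) (a + (m + 2 : ℕ) * τ), f t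
        = ∫⁻ s in Set.Ioc a (a + τ), f (s + (m + 1 : ℕ) * τ) := by
      have he : Set.Ioc (a + (m + 1 : ℕ) * τ) (a + (m + 2 : ℕ) * τ)
          = Set.Ioc (a + (m + 1 : ℕ) * τ) ((a + τ) + (m + 1 : ℕ) * τ) := by
        congr 1; push_cast; ring
      rw [he, shiftIoc f hf]
    rw [hsplit, lintegral_union measurableSet_Ioc hdisj, ih, htr,
      Finset.sum_range_succ _ (m + 1)]

lemma sumSq (m : ℕ) (d : ℕ → ℝ) (c : ℝ) (h : ∑ k ∈ Finset.range m, d k = m * c) :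
    ∑ k ∈ Finset.range m, (d k) ^ 2
      = (∑ k ∈ Finset.range m, (d k - c) ^ 2) + m * c ^ 2 := by
  have e : ∀ k ∈ Finset.range m, (d k - c) ^ 2 = (d k) ^ 2 - 2 * c * d k + c ^ 2 := by
    intro k _; ring
  rw [Finset.sum_congr rfl e]
  rw [Finset.sum_add_distrib, Finset.sum_sub_distrib, ← Finset.mul_sum, h,
    Finset.sum_const, Finset.card_range, nsmul_eq_mul]
  ring

/-- Uniqueness of the Gluskabi raccordation of Theorem 1 up to null sets: any candidate
trajectory achieving the minimal persistence cost `J(x*)` agrees with `x*` almost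
everywhere. -/
theorem gluskabi_raccordation_unique
    (τ a b : ℝ) (hτ : 0 < τ) (n : ℕ) (hn : 1 ≤ n) (hb : b = a + n * τ)
    (xa xb : ℝ → ℝ) (hxa : Continuous xa) (hxb : Continuous xb)
    (hxa_per : ∀ t, xa (t + τ) = xa t) (hxb_per : ∀ t, xb (t + τ) = xb t)
    (xstar : ℝ → ℝ)
    (hxstar_a : ∀ t, t ≤ a → xstar t = xa t)
    (hxstar_mid : ∀ t, a < t → t < b →
      xstar t = xa t + (1 + (⌊(t - a) / τ⌋ : ℝ)) * (xb t - xa t) / (n + 1))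
    (hxstar_b : ∀ t, b ≤ t → xstar t = xb t)
    (x : ℝ → ℝ) (hx : Measurable x)
    (hx_a : ∀ t, t ≤ a → x t = xa t) (hx_b : ∀ t, b ≤ t → x t = xb t)
    (hcost : (∫⁻ t in Set.Ioc a (b + τ), ENNReal.ofReal ((x t - x (t - τ)) ^ 2)) =
      ∫⁻ t in Set.Ioc a (b + τ), ENNReal.ofReal ((xstar t - xstar (t - τ)) ^ 2)) :
    ∀ᵐ t : ℝ, x t = xstar t := by
  have hn1 : (0:ℝ) < (n:ℝ) + 1 := by positivity
  set Δ : ℝ → ℝ := fun s => (xb s - xa s) / ((n:ℝ) + 1) with hΔ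
  -- iterated periodicity
  have hxa_shift : ∀ (k : ℕ) (s : ℝ), xa (s + k * τ) = xa s := by
    intro k
    induction k with
    | zero => intro s; norm_num
    | succ m ih =>
      intro s
      have : s + ((m+1:ℕ):ℝ) * τ = (s + m * τ) + τ := by push_cast; ring
      rw [this, hxa_per, ih]
  have hxb_shift : ∀ (k : ℕ) (s : ℝ), xb (s + k * τ) = xb s := by
    intro k
    induction k with
    | zero => intro s; norm_num
    | succ m ih =>
      intro s
      have : s + ((m+1:ℕ):ℝ) * τ = (s + m * τ) + τ := by push_cast; ring
      rw [this, hxb_per, ih]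
  -- xstar is measurable
  have hxs_meas : Measurable xstar := by
    have hy : xstar = fun t => if t ≤ a then xa t else if b ≤ t then xb t
        else xa t + (1 + (⌊(t - a) / τ⌋ : ℝ)) * (xb t - xa t) / ((n:ℝ) + 1) := by
      funext t
      by_cases h1 : t ≤ a
      · simp [h1, hxstar_a t h1]
      · by_cases h2 : b ≤ t
        · simp [h1, h2, hxstar_b t h2]
        · push_neg at h1 h2
          simp only [not_le.mpr h1, not_le.mpr h2, if_false]
          exact hxstar_mid t h1 h2
    rw [hy]
    have hfl : Measurable fun t : ℝ => ((⌊(t - a) / τ⌋ : ℤ) : ℝ) :=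
      Measurable.comp measurable_from_top (Int.measurable_floor.comp
        ((measurable_id.sub measurable_const).div measurable_const) :
        Measurable fun t : ℝ => ⌊(t - a) / τ⌋)
    refine Measurable.ite measurableSet_Iic hxa.measurable ?_
    refine Measurable.ite measurableSet_Ici hxb.measurable ?_
    exact (hxa.measurable.add (((measurable_const.add hfl).mul
      (hxb.measurable.sub hxa.measurable)).div measurable_const))
  -- boundary values of x on the base interval
  have hx_low : ∀ s, s ≤ a + τ → x (s - τ) = xa s := by
    intro s hs
    have h1 : s - τ ≤ a := by linarith
    rw [hx_a _ h1, ← hxa_per (s - τ)]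
    norm_num
  have hx_high : ∀ s, a ≤ s → x (s + n * τ) = xb s := by
    intro s hs
    have h1 : b ≤ s + n * τ := by rw [hb]; linarith
    rw [hx_b _ h1, ← hxb_shift n s]
  -- telescoping sum
  have htel : ∀ s ∈ Set.Ioc a (a + τ),
      ∑ k ∈ Finset.range (n + 1), (x (s + k * τ) - x (s + k * τ - τ))
        = ((n + 1 : ℕ) : ℝ) * Δ s := by
    intro s hs
    have he : ∀ k ∈ Finset.range (n + 1), x (s + k * τ) - x (s + k * τ - τ)
        = (fun k : ℕ => x (s + k * τ - τ)) (k + 1) - (fun k : ℕ => x (s + k * τ - τ)) k := by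
      intro k _
      have harg : s + ((k+1:ℕ):ℝ) * τ - τ = s + k * τ := by push_cast; ring
      simp only [harg]
    rw [Finset.sum_congr rfl he, Finset.sum_range_sub (fun k : ℕ => x (s + k * τ - τ))]
    have h0 : s + ((0:ℕ):ℝ) * τ - τ = s - τ := by norm_num
    have hn' : s + ((n+1:ℕ):ℝ) * τ - τ = s + n * τ := by push_cast; ring
    rw [h0, hn', hx_low s hs.2, hx_high s hs.1.le]
    rw [hΔ]
    push_cast
    field_simp
  -- values of xstar
  have hxstar_k : ∀ s ∈ Set.Ioo a (a + τ), ∀ k : ℕ, k ≤ n →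
      xstar (s + k * τ) = xa s + ((k:ℝ) + 1) * Δ s := by
    intro s hs k hk
    rcases eq_or_lt_of_le hk with hkn | hkn
    · subst hkn
      have h1 : b ≤ s + k * τ := by rw [hb]; linarith [hs.1]
      rw [hxstar_b _ h1, hxb_shift k s, hΔ]
      field_simp
      ring
    · have h1 : a < s + k * τ := by
        have : (0:ℝ) ≤ (k:ℝ) * τ := by positivity
        linarith [hs.1]
      have h2 : s + k * τ < b := by
        rw [hb]
        have : ((k:ℝ) + 1) * τ ≤ (n:ℝ) * τ := by
          have : (k:ℝ) + 1 ≤ (n:ℝ) := by exact_mod_cast hkn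
          nlinarith
        nlinarith [hs.2]
      rw [hxstar_mid _ h1 h2]
      have harg : (s + k * τ - a) / τ = (s - a) / τ + (k:ℕ) := by
        field_simp
        ring
      have hfl0 : ⌊(s - a) / τ⌋ = 0 := by
        rw [Int.floor_eq_zero_iff]
        constructor
        · exact div_nonneg (by linarith [hs.1]) hτ.le
        · exact (div_lt_one hτ).mpr (by linarith [hs.2])
      have hfl : (⌊(s + k * τ - a) / τ⌋ : ℝ) = (k : ℝ) := by
        rw [harg, Int.floor_add_natCast, hfl0]
        push_cast
        ring
      rw [hfl, hxa_shift k s, hxb_shift k s, hΔ]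
      ring
  have hgstar : ∀ s ∈ Set.Ioo a (a + τ), ∀ k : ℕ, k ≤ n →
      xstar (s + k * τ) - xstar (s + k * τ - τ) = Δ s := by
    intro s hs k hk
    match k with
    | 0 =>
      have h0 : s + ((0:ℕ):ℝ) * τ = s := by norm_num
      have hlow : xstar (s - τ) = xa s := by
        have h1 : s - τ ≤ a := by linarith [hs.2]
        rw [hxstar_a _ h1, ← hxa_per (s - τ)]
        norm_num
      rw [h0]
      have := hxstar_k s hs 0 (Nat.zero_le n)
      rw [show s + ((0:ℕ):ℝ) * τ = s by norm_num] at this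
      rw [this, hlow]
      push_cast
      ring
    | m + 1 =>
      have harg : s + ((m+1:ℕ):ℝ) * τ - τ = s + (m:ℕ) * τ := by push_cast; ring
      rw [harg, hxstar_k s hs (m+1) hk, hxstar_k s hs m (by omega)]
      push_cast
      ring
  -- measurability helpers
  have hΔcont : Continuous Δ := (hxb.sub hxa).div_const _
  have hfx : Measurable fun t => ENNReal.ofReal ((x t - x (t - τ)) ^ 2) :=
    ((hx.sub (hx.comp (measurable_id.sub measurable_const))).pow_const 2).ennreal_ofReal
  have hfstar : Measurable fun t => ENNReal.ofReal ((xstar t - xstar (t - τ)) ^ 2) :=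
    ((hxs_meas.sub (hxs_meas.comp (measurable_id.sub measurable_const))).pow_const 2).ennreal_ofReal
  have hgk : ∀ k : ℕ, Measurable fun s =>
      ENNReal.ofReal ((x (s + k * τ) - x (s + k * τ - τ) - Δ s) ^ 2) := by
    intro k
    exact ((((hx.comp (measurable_add_const _)).sub
      (hx.comp ((measurable_add_const ((k:ℝ) * τ)).sub measurable_const))).sub
      hΔcont.measurable).pow_const 2).ennreal_ofReal
  have hbτ : b + τ = a + ((n + 1 : ℕ) : ℝ) * τ := by rw [hb]; push_cast; ring
  -- decompose LHS over periods
  have hLHS : (∫⁻ t in Set.Ioc a (b + τ), ENNReal.ofReal ((x t - x (t - τ)) ^ 2))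
      = ∫⁻ s in Set.Ioc a (a + τ), ∑ k ∈ Finset.range (n + 1),
          ENNReal.ofReal ((x (s + k * τ) - x (s + k * τ - τ)) ^ 2) := by
    rw [hbτ, decompIoc _ hfx a τ hτ n]
    exact (lintegral_finset_sum (Finset.range (n + 1))
      (fun k _ => hfx.comp (measurable_add_const ((k:ℝ) * τ)))).symm
  -- pointwise identity
  have hpt : ∀ s ∈ Set.Ioc a (a + τ),
      (∑ k ∈ Finset.range (n + 1),
          ENNReal.ofReal ((x (s + k * τ) - x (s + k * τ - τ)) ^ 2))
        = (∑ k ∈ Finset.range (n + 1),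
            ENNReal.ofReal ((x (s + k * τ) - x (s + k * τ - τ) - Δ s) ^ 2))
          + ENNReal.ofReal (((n + 1 : ℕ) : ℝ) * (Δ s) ^ 2) := by
    intro s hs
    rw [← ENNReal.ofReal_sum_of_nonneg (fun i _ => sq_nonneg _),
      ← ENNReal.ofReal_sum_of_nonneg (fun i _ => sq_nonneg _),
      ← ENNReal.ofReal_add (Finset.sum_nonneg fun i _ => sq_nonneg _) (by positivity)]
    congr 1
    exact sumSq (n + 1) (fun k => x (s + k * τ) - x (s + k * τ - τ)) (Δ s) (htel s hs)
  set E : ℝ≥0∞ := ∫⁻ s in Set.Ioc a (a + τ), ∑ k ∈ Finset.range (n + 1),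
      ENNReal.ofReal ((x (s + k * τ) - x (s + k * τ - τ) - Δ s) ^ 2) with hE
  set C : ℝ≥0∞ := ∫⁻ s in Set.Ioc a (a + τ), ENNReal.ofReal ((Δ s) ^ 2) with hC
  have hLHS2 : (∫⁻ t in Set.Ioc a (b + τ), ENNReal.ofReal ((x t - x (t - τ)) ^ 2))
      = E + ((n + 1 : ℕ) : ℝ≥0∞) * C := by
    rw [hLHS, setLIntegral_congr_fun_ae measurableSet_Ioc (Filter.Eventually.of_forall hpt),
      lintegral_add_right (g := fun s => ENNReal.ofReal (((n + 1 : ℕ) : ℝ) * (Δ s) ^ 2)) _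
        (((measurable_const.mul (hΔcont.measurable.pow_const 2)) :
          Measurable fun s => ((n + 1 : ℕ) : ℝ) * (Δ s) ^ 2).ennreal_ofReal)]
    congr 1
    have : ∀ s : ℝ, ENNReal.ofReal (((n + 1 : ℕ) : ℝ) * (Δ s) ^ 2)
        = ((n + 1 : ℕ) : ℝ≥0∞) * ENNReal.ofReal ((Δ s) ^ 2) := by
      intro s
      rw [ENNReal.ofReal_mul (by positivity), ENNReal.ofReal_natCast]
    simp_rw [this]
    rw [lintegral_const_mul _ ((hΔcont.measurable.pow_const 2).ennreal_ofReal)]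
  -- RHS equals the minimum
  have hRHS : (∫⁻ t in Set.Ioc a (b + τ), ENNReal.ofReal ((xstar t - xstar (t - τ)) ^ 2))
      = ((n + 1 : ℕ) : ℝ≥0∞) * C := by
    rw [hbτ, decompIoc _ hfstar a τ hτ n]
    have hterm : ∀ k ∈ Finset.range (n + 1),
        (∫⁻ s in Set.Ioc a (a + τ),
          ENNReal.ofReal ((xstar (s + k * τ) - xstar (s + k * τ - τ)) ^ 2)) = C := by
      intro k hk
      have hk' : k ≤ n := by
        have := Finset.mem_range.mp hk; omega
      rw [hC, ← setLIntegral_congr (Ioo_ae_eq_Ioc (a := a) (b := a + τ) (μ := volume)),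
        ← setLIntegral_congr (Ioo_ae_eq_Ioc (a := a) (b := a + τ) (μ := volume))]
      refine setLIntegral_congr_fun_ae measurableSet_Ioo (Filter.Eventually.of_forall ?_)
      intro s hs
      rw [hgstar s hs k hk']
    rw [Finset.sum_congr rfl hterm, Finset.sum_const, Finset.card_range, nsmul_eq_mul]
  -- finiteness of the minimum
  have hCfin : ((n + 1 : ℕ) : ℝ≥0∞) * C ≠ ∞ := by
    refine ENNReal.mul_ne_top (ENNReal.natCast_ne_top _) ?_
    have hint : IntegrableOn (fun s => (Δ s) ^ 2) (Set.Ioc a (a + τ)) volume :=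
      (hΔcont.pow 2).integrableOn_Ioc
    exact hint.lintegral_lt_top.ne
  -- deviation integral vanishes
  have hE0 : E = 0 := by
    have h1 : E + ((n + 1 : ℕ) : ℝ≥0∞) * C = 0 + ((n + 1 : ℕ) : ℝ≥0∞) * C := by
      rw [zero_add, ← hLHS2, hcost, hRHS]
    exact WithTop.add_right_cancel hCfin h1
  have hmeasSum : Measurable fun s => ∑ k ∈ Finset.range (n + 1),
      ENNReal.ofReal ((x (s + k * τ) - x (s + k * τ - τ) - Δ s) ^ 2) :=
    Finset.measurable_sum _ fun k _ => hgk k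
  have hae0 : ∀ᵐ s ∂(volume.restrict (Set.Ioc a (a + τ))),
      (∑ k ∈ Finset.range (n + 1),
        ENNReal.ofReal ((x (s + k * τ) - x (s + k * τ - τ) - Δ s) ^ 2)) = 0 :=
    (lintegral_eq_zero_iff hmeasSum).mp hE0
  have HP : ∀ᵐ s : ℝ, s ∈ Set.Ioc a (a + τ) →
      ∀ k : ℕ, k ≤ n → x (s + k * τ) - x (s + k * τ - τ) = Δ s := by
    have h2 := (ae_restrict_iff' measurableSet_Ioc).mp hae0
    filter_upwards [h2] with s hsum hmem k hk
    have hz := Finset.sum_eq_zero_iff.mp (hsum hmem) k (Finset.mem_range.mpr (by omega))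
    have hsq : (x (s + k * τ) - x (s + k * τ - τ) - Δ s) ^ 2 = 0 :=
      le_antisymm (ENNReal.ofReal_eq_zero.mp hz) (sq_nonneg _)
    have := pow_eq_zero_iff (n := 2) (by norm_num) |>.mp hsq
    linarith [this]
  -- upgrade to values of x matching xstar
  have HxP : ∀ᵐ s : ℝ, s ∈ Set.Ioo a (a + τ) →
      ∀ k : ℕ, k ≤ n → x (s + k * τ) = xstar (s + k * τ) := by
    filter_upwards [HP] with s h hmem k hk
    have hmem' : s ∈ Set.Ioc a (a + τ) := Set.Ioo_subset_Ioc_self hmem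
    have key : ∀ k : ℕ, k ≤ n → x (s + k * τ) = xa s + ((k:ℝ) + 1) * Δ s := by
      intro k
      induction k with
      | zero =>
        intro _
        have hd := h hmem' 0 (Nat.zero_le n)
        have e0 : s + ((0:ℕ):ℝ) * τ = s := by norm_num
        rw [e0] at hd ⊢
        have hlow := hx_low s hmem'.2
        push_cast
        nlinarith [hd, hlow]
      | succ m ih =>
        intro hk1
        have hd := h hmem' (m + 1) hk1
        have harg : s + ((m + 1 : ℕ):ℝ) * τ - τ = s + (m:ℕ) * τ := by push_cast; ring
        rw [harg] at hd
        have := ih (by omega)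
        push_cast at this hd ⊢
        nlinarith [this, hd]
    rw [key k hk, hxstar_k s hmem k hk]
  -- translate the a.e. statement
  have Hk : ∀ k : ℕ, ∀ᵐ t : ℝ, ((t - k * τ) ∈ Set.Ioo a (a + τ) →
      ∀ j : ℕ, j ≤ n → x ((t - k * τ) + j * τ) = xstar ((t - k * τ) + j * τ)) := by
    intro k
    have hqmp : Measure.QuasiMeasurePreserving (fun t : ℝ => t - k * τ) volume volume :=
      (measurePreserving_sub_right volume ((k:ℝ) * τ)).quasiMeasurePreserving
    exact hqmp.tendsto_ae.eventually HxP
  have Hall : ∀ᵐ t : ℝ, ∀ k : ℕ, ((t - k * τ) ∈ Set.Ioo a (a + τ) →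
      ∀ j : ℕ, j ≤ n → x ((t - k * τ) + j * τ) = xstar ((t - k * τ) + j * τ)) :=
    ae_all_iff.mpr Hk
  have hbd : ∀ᵐ t : ℝ, ∀ k : ℕ, k ≤ n → t ≠ a + k * τ := by
    have h0 : ∀ᵐ t : ℝ, t ∉ (↑((Finset.range (n + 1)).image fun k : ℕ => a + k * τ) : Set ℝ) :=
      measure_eq_zero_iff_ae_notMem.mp (Set.Finite.measure_zero (Finset.finite_toSet _) _)
    filter_upwards [h0] with t ht k hk he
    exact ht (Finset.mem_coe.mpr (Finset.mem_image.mpr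
      ⟨k, Finset.mem_range.mpr (by omega), he.symm⟩))
  filter_upwards [Hall, hbd] with t hQ hB
  by_cases h1 : t ≤ a
  · rw [hx_a t h1, hxstar_a t h1]
  by_cases h2 : b ≤ t
  · rw [hx_b t h2, hxstar_b t h2]
  push_neg at h1 h2
  set j : ℕ := (⌊(t - a) / τ⌋).toNat with hj
  have hfl_nonneg : (0:ℤ) ≤ ⌊(t - a) / τ⌋ :=
    Int.floor_nonneg.mpr (div_nonneg (by linarith) hτ.le)
  have hjcast : ((j:ℕ):ℝ) = ((⌊(t - a) / τ⌋ : ℤ) : ℝ) := by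
    rw [hj]; exact_mod_cast congrArg (fun z : ℤ => (z:ℝ)) (Int.toNat_of_nonneg hfl_nonneg)
  have hjle : (j:ℝ) * τ ≤ t - a := by
    have := Int.floor_le ((t - a) / τ)
    rw [← hjcast] at this
    calc (j:ℝ) * τ ≤ ((t - a) / τ) * τ := by nlinarith
    _ = t - a := by field_simp
  have hjlt : t - a < ((j:ℝ) + 1) * τ := by
    have := Int.lt_floor_add_one ((t - a) / τ)
    rw [← hjcast] at this
    calc t - a = ((t - a) / τ) * τ := by field_simp
    _ < ((j:ℝ) + 1) * τ := by nlinarith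
  have hjn : j < n := by
    have hlt : (t - a) / τ < (n:ℝ) := by
      rw [div_lt_iff₀ hτ]
      rw [hb] at h2
      linarith
    have h3 : (j:ℝ) < (n:ℝ) := by
      have := Int.floor_le ((t - a) / τ)
      rw [← hjcast] at this
      linarith
    exact_mod_cast h3
  have hne : t ≠ a + j * τ := hB j (by omega)
  have hsmem : (t - j * τ) ∈ Set.Ioo a (a + τ) := by
    constructor
    · rcases lt_or_eq_of_le (by linarith : a ≤ t - j * τ) with h | h
      · exact h
      · exact absurd (by linarith : t = a + j * τ) hne
    · linarith
  have := hQ j hsmem j (by omega)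
  rwa [sub_add_cancel] at this
end

section
/- If a candidate trajectory x minimizes the persistence cost, i.e., J(x) ≤ J(y) for every candidate trajectory y, then for almost every t ∈ (a, b) one has x(t+τ) − x(t) = x(t) − x(t−τ). (The Euler–Lagrange/periodicity necessary condition λ(t) = λ(t+τ) for the optimal control u in Theorem 1.) -/
open MeasureTheory
open scoped ENNReal

private lemma shift_indicator_aux (A B c : ℝ) (f : ℝ → ℝ) (u : ℝ) :
    (Set.Ioo (A + c) (B + c)).indicator f (u + c)
      = (Set.Ioo A B).indicator (fun v => f (v + c)) u := by
  have hmem : u + c ∈ Set.Ioo (A + c) (B + c) ↔ u ∈ Set.Ioo A B := by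
    simp [Set.mem_Ioo]
  simp only [Set.indicator_apply]
  exact if_congr hmem rfl rfl

private lemma shift_setIntegral_aux (A B c : ℝ) (f : ℝ → ℝ) :
    (∫ t in Set.Ioo (A + c) (B + c), f t) = ∫ u in Set.Ioo A B, f (u + c) := by
  calc (∫ t in Set.Ioo (A + c) (B + c), f t)
      = ∫ t, (Set.Ioo (A + c) (B + c)).indicator f t :=
        (integral_indicator measurableSet_Ioo).symm
    _ = ∫ u, (Set.Ioo (A + c) (B + c)).indicator f (u + c) :=
        (integral_add_right_eq_self _ c).symm
    _ = ∫ u, (Set.Ioo A B).indicator (fun v => f (v + c)) u := by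
        simp only [shift_indicator_aux]
    _ = ∫ u in Set.Ioo A B, f (u + c) := integral_indicator measurableSet_Ioo

private lemma shift_integrableOn_aux (A B c : ℝ) (f : ℝ → ℝ)
    (hf : IntegrableOn f (Set.Ioo (A + c) (B + c))) :
    IntegrableOn (fun u => f (u + c)) (Set.Ioo A B) := by
  have h1 : Integrable ((Set.Ioo (A + c) (B + c)).indicator f) volume :=
    (integrable_indicator_iff measurableSet_Ioo).mpr hf
  have h2 := h1.comp_add_right c
  have h3 : (fun u => (Set.Ioo (A + c) (B + c)).indicator f (u + c))
      = (Set.Ioo A B).indicator (fun v => f (v + c)) :=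
    funext (shift_indicator_aux A B c f)
  rw [h3] at h2
  exact (integrable_indicator_iff measurableSet_Ioo).mp h2

/-- The Euler–Lagrange/periodicity necessary condition of Theorem 1: if a candidate
trajectory `x` minimizes the persistence cost among all candidate trajectories, then
for almost every `t ∈ (a, b)` one has `x(t+τ) - x(t) = x(t) - x(t-τ)`. -/
theorem gluskabi_euler_lagrange
    (τ a b : ℝ) (hτ : 0 < τ) (n : ℕ) (hn : 1 ≤ n) (hb : b = a + n * τ)
    (xa xb : ℝ → ℝ) (hxa : Continuous xa) (hxb : Continuous xb)
    (hxa_per : ∀ t, xa (t + τ) = xa t) (hxb_per : ∀ t, xb (t + τ) = xb t)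
    (x : ℝ → ℝ) (hx : Measurable x)
    (hx_a : ∀ t, t ≤ a → x t = xa t) (hx_b : ∀ t, b ≤ t → x t = xb t)
    (hmin : ∀ y : ℝ → ℝ, Measurable y → (∀ t, t ≤ a → y t = xa t) →
      (∀ t, b ≤ t → y t = xb t) →
      (∫⁻ t in Set.Ioc a (b + τ), ENNReal.ofReal ((x t - x (t - τ)) ^ 2)) ≤
        ∫⁻ t in Set.Ioc a (b + τ), ENNReal.ofReal ((y t - y (t - τ)) ^ 2)) :
    ∀ᵐ t ∂(volume.restrict (Set.Ioo a b)), x (t + τ) - x t = x t - x (t - τ) := by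
  classical
  have hab : a < b := by
    have h1 : (1:ℝ) ≤ (n:ℝ) := by exact_mod_cast hn
    nlinarith
  set I : Set ℝ := Set.Ioc a (b + τ) with hI_def
  set S : Set ℝ := Set.Ioo a b with hS_def
  set S' : Set ℝ := Set.Ioo (a + τ) (b + τ) with hS'_def
  have hSmeas : MeasurableSet S := hS_def ▸ measurableSet_Ioo
  have hS'meas : MeasurableSet S' := hS'_def ▸ measurableSet_Ioo
  have hSsubI : S ⊆ I := by
    rw [hS_def, hI_def]; intro t ht
    exact ⟨ht.1, by have := ht.2; linarith⟩
  have hS'subI : S' ⊆ I := by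
    rw [hS'_def, hI_def]; intro t ht
    exact ⟨by have := ht.1; linarith, le_of_lt ht.2⟩
  have hvolI : volume I < ⊤ := by
    rw [hI_def, Real.volume_Ioc]; exact ENNReal.ofReal_lt_top
  -- auxiliary functions
  obtain ⟨g, hg_def⟩ : ∃ g : ℝ → ℝ, ∀ t, g t = x t - x (t - τ) := ⟨_, fun _ => rfl⟩
  obtain ⟨h, hh_def⟩ : ∃ h : ℝ → ℝ,
      ∀ t, h t = (x (t + τ) - x t) - (x t - x (t - τ)) := ⟨_, fun _ => rfl⟩
  obtain ⟨s, hs_def⟩ : ∃ s : ℝ → ℝ, ∀ t, s t = if 0 ≤ h t then 1 else -1 := ⟨_, fun _ => rfl⟩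
  obtain ⟨Φ, hΦ_def⟩ : ∃ Φ : ℝ → ℝ, Φ = S.indicator s := ⟨_, rfl⟩
  obtain ⟨Δ, hΔ_def⟩ : ∃ Δ : ℝ → ℝ, ∀ t, Δ t = Φ t - Φ (t - τ) := ⟨_, fun _ => rfl⟩
  have hhg : ∀ t, h t = g (t + τ) - g t := by
    intro t; rw [hh_def, hg_def, hg_def, add_sub_cancel_right]
  -- measurability
  have hxsub : Measurable fun t : ℝ => x (t - τ) := hx.comp (measurable_id.sub measurable_const)
  have hxadd : Measurable fun t : ℝ => x (t + τ) := hx.comp (measurable_id.add measurable_const)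
  have hg_meas : Measurable g := by
    have e : g = fun t => x t - x (t - τ) := funext hg_def
    rw [e]; exact hx.sub hxsub
  have hh_meas : Measurable h := by
    have e : h = fun t => (x (t + τ) - x t) - (x t - x (t - τ)) := funext hh_def
    rw [e]; exact (hxadd.sub hx).sub (hx.sub hxsub)
  have hs_meas : Measurable s := by
    have e : s = fun t => if 0 ≤ h t then (1:ℝ) else -1 := funext hs_def
    rw [e]
    exact Measurable.ite (measurableSet_le measurable_const hh_meas)
      measurable_const measurable_const
  have hΦ_meas : Measurable Φ := by rw [hΦ_def]; exact hs_meas.indicator hSmeas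
  have hΦsub_meas : Measurable fun t => Φ (t - τ) :=
    hΦ_meas.comp (measurable_id.sub measurable_const)
  have hΔ_meas : Measurable Δ := by
    have e : Δ = fun t => Φ t - Φ (t - τ) := funext hΔ_def
    rw [e]; exact hΦ_meas.sub hΦsub_meas
  -- bounds
  have hs_abs : ∀ t, |s t| ≤ 1 := by
    intro t; rw [hs_def]; split <;> simp
  have hΦ_abs : ∀ t, |Φ t| ≤ 1 := by
    intro t; rw [hΦ_def]
    by_cases ht : t ∈ S
    · rw [Set.indicator_of_mem ht]; exact hs_abs t
    · rw [Set.indicator_of_notMem ht]; simp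
  have hΔ_abs : ∀ t, |Δ t| ≤ 2 := by
    intro t
    have h1 := abs_le.mp (hΦ_abs t)
    have h2 := abs_le.mp (hΦ_abs (t - τ))
    rw [hΔ_def, abs_le]; constructor <;> linarith [h1.1, h1.2, h2.1, h2.2]
  -- Step A : the cost of x is finite
  obtain ⟨C1, hC1⟩ := (isCompact_Icc : IsCompact (Set.Icc (a - τ) a)).exists_bound_of_continuousOn
    hxa.continuousOn
  obtain ⟨C2, hC2⟩ := (isCompact_Icc : IsCompact (Set.Icc b (b + τ))).exists_bound_of_continuousOn
    hxb.continuousOn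
  set C := max (max C1 C2) 0 with hC_def
  have hC0 : 0 ≤ C := le_max_right _ _
  set y₀ : ℝ → ℝ := fun t => if t ≤ a then xa t else if b ≤ t then xb t else 0 with hy₀_def
  have hy₀_meas : Measurable y₀ := by
    apply Measurable.ite (measurableSet_le measurable_id measurable_const) hxa.measurable
    exact Measurable.ite (measurableSet_le measurable_const measurable_id)
      hxb.measurable measurable_const
  have hy₀_bound : ∀ t, a - τ ≤ t → t ≤ b + τ → |y₀ t| ≤ C := by
    intro t h1 h2
    rw [hy₀_def]; simp only
    split_ifs with ht1 ht2
    · exact le_trans (by simpa [Real.norm_eq_abs] using hC1 t ⟨h1, ht1⟩)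
        (le_trans (le_max_left _ _) (le_max_left _ _))
    · exact le_trans (by simpa [Real.norm_eq_abs] using hC2 t ⟨ht2, h2⟩)
        (le_trans (le_max_right _ _) (le_max_left _ _))
    · simpa using hC0
  have hy₀a : ∀ t, t ≤ a → y₀ t = xa t := fun t ht => if_pos ht
  have hy₀b : ∀ t, b ≤ t → y₀ t = xb t := by
    intro t ht
    rw [hy₀_def]; simp only
    rw [if_neg (by linarith), if_pos ht]
  have hy₀J : (∫⁻ t in I, ENNReal.ofReal ((y₀ t - y₀ (t - τ)) ^ 2)) < ⊤ := by
    have hle : ∀ t ∈ I, ENNReal.ofReal ((y₀ t - y₀ (t - τ)) ^ 2)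
        ≤ ENNReal.ofReal ((2 * C) ^ 2) := by
      intro t ht
      rw [hI_def] at ht
      apply ENNReal.ofReal_le_ofReal
      have hb1 := abs_le.mp (hy₀_bound t (by linarith [ht.1]) ht.2)
      have hb2 := abs_le.mp (hy₀_bound (t - τ) (by linarith [ht.1]) (by linarith [ht.2]))
      nlinarith [hb1.1, hb1.2, hb2.1, hb2.2]
    calc (∫⁻ t in I, ENNReal.ofReal ((y₀ t - y₀ (t - τ)) ^ 2))
        ≤ ∫⁻ _ in I, ENNReal.ofReal ((2 * C) ^ 2) := setLIntegral_mono measurable_const hle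
      _ = ENNReal.ofReal ((2 * C) ^ 2) * volume I := setLIntegral_const _ _
      _ < ⊤ := ENNReal.mul_lt_top ENNReal.ofReal_lt_top hvolI
  have hJx : (∫⁻ t in I, ENNReal.ofReal (g t ^ 2)) < ⊤ := by
    refine lt_of_le_of_lt ?_ hy₀J
    rw [show (∫⁻ t in I, ENNReal.ofReal (g t ^ 2))
        = ∫⁻ t in I, ENNReal.ofReal ((x t - x (t - τ)) ^ 2) from
      lintegral_congr fun t => by rw [hg_def]]
    exact hmin y₀ hy₀_meas hy₀a hy₀b
  -- Step B : integrability facts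
  have hg2 : IntegrableOn (fun t => g t ^ 2) I := by
    refine ⟨(hg_meas.pow_const 2).aestronglyMeasurable, ?_⟩
    rw [hasFiniteIntegral_iff_ofReal (ae_of_all _ fun t => sq_nonneg (g t))]
    exact hJx
  have hconstI : ∀ r : ℝ, IntegrableOn (fun _ => r) I :=
    fun r => (integrableOn_const_iff (C := r)).mpr (Or.inr hvolI)
  have habs_sq : ∀ r : ℝ, |r| ≤ 1 + r ^ 2 := fun r => by
    nlinarith [sq_nonneg (|r| - 1), sq_abs r, abs_nonneg r]
  have hgI : IntegrableOn g I := by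
    apply Integrable.mono' ((hconstI 1).add hg2) hg_meas.aestronglyMeasurable
    exact ae_of_all _ fun t => by simpa [Real.norm_eq_abs] using habs_sq (g t)
  have hvolS : volume S < ⊤ := by
    rw [hS_def, Real.volume_Ioo]; exact ENNReal.ofReal_lt_top
  have hconstS : ∀ r : ℝ, IntegrableOn (fun _ => r) S :=
    fun r => (integrableOn_const_iff (C := r)).mpr (Or.inr hvolS)
  have hg2S : IntegrableOn (fun t => g t ^ 2) S := hg2.mono_set hSsubI
  have hg2S' : IntegrableOn (fun t => g t ^ 2) S' := hg2.mono_set hS'subI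
  have hg2shift : IntegrableOn (fun u => g (u + τ) ^ 2) S := by
    rw [hS_def]
    apply shift_integrableOn_aux a b τ (fun t => g t ^ 2)
    rw [← hS'_def]; exact hg2S'
  have hgS : IntegrableOn g S := hgI.mono_set hSsubI
  have hgshiftS : IntegrableOn (fun u => g (u + τ)) S := by
    apply Integrable.mono' ((hconstS 1).add hg2shift)
      (hg_meas.comp (measurable_id.add measurable_const)).aestronglyMeasurable
    exact ae_of_all _ fun t => by simpa [Real.norm_eq_abs] using habs_sq (g (t + τ))
  have hhS : IntegrableOn h S := by
    have e : h = fun u => g (u + τ) - g u := funext hhg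
    rw [e]; exact hgshiftS.sub hgS
  have hΔ2I : IntegrableOn (fun t => Δ t ^ 2) I := by
    apply Integrable.mono' (hconstI 4) (hΔ_meas.pow_const 2).aestronglyMeasurable
    refine ae_of_all _ fun t => ?_
    have h1 := abs_le.mp (hΔ_abs t)
    rw [Real.norm_eq_abs, abs_of_nonneg (sq_nonneg _)]
    nlinarith [h1.1, h1.2]
  have hgΔI : IntegrableOn (fun t => g t * Δ t) I := by
    apply Integrable.mono' (((hconstI 1).add hg2).const_mul 2)
      (hg_meas.mul hΔ_meas).aestronglyMeasurable
    refine ae_of_all _ fun t => ?_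
    simp only [Pi.add_apply, Pi.mul_apply]
    rw [Real.norm_eq_abs, abs_mul]
    have hp := mul_le_mul_of_nonneg_left (hΔ_abs t) (abs_nonneg (g t))
    linarith [habs_sq (g t), hp]
  set K := ∫ t in S, |h t| with hK_def
  set Q := ∫ t in I, Δ t ^ 2 with hQ_def
  have hK0 : 0 ≤ K := by rw [hK_def]; exact integral_nonneg fun t => abs_nonneg _
  have hQ0 : 0 ≤ Q := by rw [hQ_def]; exact integral_nonneg fun t => sq_nonneg _
  -- pointwise sign identity
  have hsh : ∀ t, h t * s t = |h t| := by
    intro t; rw [hs_def]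
    split_ifs with hht
    · rw [mul_one, abs_of_nonneg hht]
    · rw [abs_of_neg (lt_of_not_ge hht)]; ring
  -- Step C : first-variation computation  ∫_I g Δ = -K
  have hgΦI : IntegrableOn (fun t => g t * Φ t) I := by
    apply Integrable.mono' ((hconstI 1).add hg2) (hg_meas.mul hΦ_meas).aestronglyMeasurable
    refine ae_of_all _ fun t => ?_
    simp only [Pi.add_apply, Pi.mul_apply]
    rw [Real.norm_eq_abs, abs_mul]
    have hp := mul_le_mul_of_nonneg_left (hΦ_abs t) (abs_nonneg (g t))
    linarith [habs_sq (g t), hp]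
  have hgΦ'I : IntegrableOn (fun t => g t * Φ (t - τ)) I := by
    apply Integrable.mono' ((hconstI 1).add hg2) (hg_meas.mul hΦsub_meas).aestronglyMeasurable
    refine ae_of_all _ fun t => ?_
    simp only [Pi.add_apply, Pi.mul_apply]
    rw [Real.norm_eq_abs, abs_mul]
    have hp := mul_le_mul_of_nonneg_left (hΦ_abs (t - τ)) (abs_nonneg (g t))
    linarith [habs_sq (g t), hp]
  have hgsS : IntegrableOn (fun t => g t * s t) S := by
    apply Integrable.mono' ((hconstS 1).add hg2S) (hg_meas.mul hs_meas).aestronglyMeasurable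
    refine ae_of_all _ fun t => ?_
    simp only [Pi.add_apply, Pi.mul_apply]
    rw [Real.norm_eq_abs, abs_mul]
    have hp := mul_le_mul_of_nonneg_left (hs_abs t) (abs_nonneg (g t))
    linarith [habs_sq (g t), hp]
  have hg'sS : IntegrableOn (fun t => g (t + τ) * s t) S := by
    apply Integrable.mono' ((hconstS 1).add hg2shift)
      ((hg_meas.comp (measurable_id.add measurable_const)).mul hs_meas).aestronglyMeasurable
    refine ae_of_all _ fun t => ?_
    simp only [Pi.add_apply, Pi.mul_apply, Function.comp_apply, id_eq]
    rw [Real.norm_eq_abs, abs_mul]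
    have hp := mul_le_mul_of_nonneg_left (hs_abs t) (abs_nonneg (g (t + τ)))
    linarith [habs_sq (g (t + τ)), hp]
  have hvar : (∫ t in I, g t * Δ t) = -K := by
    have e0 : (fun t => g t * Δ t) = fun t => g t * Φ t - g t * Φ (t - τ) :=
      funext fun t => by rw [hΔ_def]; ring
    have hterm1 : (∫ t in I, g t * Φ t) = ∫ t in S, g t * s t := by
      have e : (fun t => g t * Φ t) = S.indicator (fun t => g t * s t) := by
        funext t; rw [hΦ_def]
        by_cases ht : t ∈ S
        · rw [Set.indicator_of_mem ht, Set.indicator_of_mem ht]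
        · rw [Set.indicator_of_notMem ht, Set.indicator_of_notMem ht, mul_zero]
      rw [e, setIntegral_indicator hSmeas, Set.inter_eq_self_of_subset_right hSsubI]
    have hterm2 : (∫ t in I, g t * Φ (t - τ)) = ∫ u in S, g (u + τ) * s u := by
      have e : (fun t => g t * Φ (t - τ)) = S'.indicator (fun t => g t * s (t - τ)) := by
        funext t; rw [hΦ_def]
        by_cases ht : t - τ ∈ S
        · have htS : t ∈ S' := by
            rw [hS_def] at ht; rw [hS'_def]
            obtain ⟨h1, h2⟩ := ht
            exact ⟨by linarith, by linarith⟩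
          rw [Set.indicator_of_mem ht, Set.indicator_of_mem htS]
        · have htS : t ∉ S' := by
            intro hmem
            apply ht
            rw [hS'_def] at hmem; rw [hS_def]
            obtain ⟨h1, h2⟩ := hmem
            exact ⟨by linarith, by linarith⟩
          rw [Set.indicator_of_notMem ht, Set.indicator_of_notMem htS, mul_zero]
      rw [e, setIntegral_indicator hS'meas, Set.inter_eq_self_of_subset_right hS'subI]
      rw [hS'_def, hS_def, shift_setIntegral_aux a b τ (fun t => g t * s (t - τ))]
      simp only [add_sub_cancel_right]
    rw [e0, integral_sub hgΦI hgΦ'I, hterm1, hterm2, ← integral_sub hgsS hg'sS,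
      hK_def, ← integral_neg]
    apply integral_congr_ae
    refine ae_of_all _ fun t => ?_
    show g t * s t - g (t + τ) * s t = -|h t|
    rw [← hsh t, hhg t]
    ring
  -- Step D : the key inequality for every c > 0
  have key : ∀ c : ℝ, 0 < c → 0 ≤ 2 * c * (-K) + c ^ 2 * Q := by
    intro c hc
    set y : ℝ → ℝ := fun t => x t + c * Φ t with hy_def
    have hy_meas : Measurable y := hx.add (hΦ_meas.const_mul c)
    have hΦ0a : ∀ t, t ≤ a → Φ t = 0 := by
      intro t ht; rw [hΦ_def]
      apply Set.indicator_of_notMem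
      rw [hS_def]
      exact fun hmem => absurd hmem.1 (not_lt.mpr ht)
    have hΦ0b : ∀ t, b ≤ t → Φ t = 0 := by
      intro t ht; rw [hΦ_def]
      apply Set.indicator_of_notMem
      rw [hS_def]
      exact fun hmem => absurd hmem.2 (not_lt.mpr ht)
    have hminy := hmin y hy_meas
      (fun t ht => by rw [hy_def]; simp only; rw [hΦ0a t ht, hx_a t ht]; ring)
      (fun t ht => by rw [hy_def]; simp only; rw [hΦ0b t ht, hx_b t ht]; ring)
    have hyδ : ∀ t, y t - y (t - τ) = g t + c * Δ t := by
      intro t; rw [hy_def]; simp only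
      rw [hΔ_def, hg_def]; ring
    have hy2int : IntegrableOn (fun t => (g t + c * Δ t) ^ 2) I := by
      apply Integrable.mono' ((hg2.const_mul 2).add (hconstI (8 * c ^ 2)))
        ((hg_meas.add (hΔ_meas.const_mul c)).pow_const 2).aestronglyMeasurable
      refine ae_of_all _ fun t => ?_
      simp only [Pi.add_apply]
      rw [Real.norm_eq_abs, abs_of_nonneg (sq_nonneg _)]
      have h1 := abs_le.mp (hΔ_abs t)
      nlinarith [sq_nonneg (g t - c * Δ t), sq_nonneg c, h1.1, h1.2,
        mul_le_mul_of_nonneg_left (show Δ t ^ 2 ≤ 4 by nlinarith [h1.1, h1.2]) (sq_nonneg c)]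
    have hL : (∫⁻ t in I, ENNReal.ofReal ((x t - x (t - τ)) ^ 2))
        = ENNReal.ofReal (∫ t in I, g t ^ 2) := by
      rw [ofReal_integral_eq_lintegral_ofReal hg2 (ae_of_all _ fun t => sq_nonneg _)]
      exact lintegral_congr fun t => by rw [hg_def]
    have hR : (∫⁻ t in I, ENNReal.ofReal ((y t - y (t - τ)) ^ 2))
        = ENNReal.ofReal (∫ t in I, (g t + c * Δ t) ^ 2) := by
      rw [ofReal_integral_eq_lintegral_ofReal hy2int (ae_of_all _ fun t => sq_nonneg _)]
      exact lintegral_congr fun t => by rw [hyδ t]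
    rw [hL, hR] at hminy
    have hreal : (∫ t in I, g t ^ 2) ≤ ∫ t in I, (g t + c * Δ t) ^ 2 :=
      (ENNReal.ofReal_le_ofReal_iff (integral_nonneg fun t => sq_nonneg _)).mp hminy
    have hexp : (∫ t in I, (g t + c * Δ t) ^ 2)
        = (∫ t in I, g t ^ 2) + (2 * c * (∫ t in I, g t * Δ t) + c ^ 2 * Q) := by
      have e1 : (∫ t in I, (g t + c * Δ t) ^ 2)
          = ∫ t in I, (g t ^ 2 + (2 * c * (g t * Δ t) + c ^ 2 * Δ t ^ 2)) :=
        integral_congr_ae (ae_of_all _ fun t => by ring)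
      have i1 : IntegrableOn (fun t => 2 * c * (g t * Δ t)) I := hgΔI.const_mul (2 * c)
      have i2 : IntegrableOn (fun t => c ^ 2 * Δ t ^ 2) I := hΔ2I.const_mul (c ^ 2)
      have i12 : IntegrableOn (fun t => 2 * c * (g t * Δ t) + c ^ 2 * Δ t ^ 2) I := i1.add i2
      rw [e1, integral_add hg2 i12, integral_add i1 i2,
        integral_const_mul, integral_const_mul, hQ_def]
    rw [hexp, hvar] at hreal
    linarith
  -- Step E : conclude K = 0
  have hKzero : K = 0 := by
    by_contra hne
    have hKpos : 0 < K := lt_of_le_of_ne hK0 (Ne.symm hne)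
    rcases le_or_gt Q 0 with hQ' | hQ'
    · have := key 1 one_pos
      nlinarith
    · have hk := key (K / Q) (div_pos hKpos hQ')
      have hQne : Q ≠ 0 := ne_of_gt hQ'
      have e : 2 * (K / Q) * (-K) + (K / Q) ^ 2 * Q = -(K ^ 2 / Q) := by
        field_simp; ring
      rw [e] at hk
      have h3 : 0 < K ^ 2 / Q := div_pos (by positivity) hQ'
      linarith
  -- Step F : conclude the a.e. statement
  have hint_abs : IntegrableOn (fun t => |h t|) S := hhS.abs
  have hae : (fun t => |h t|) =ᵐ[volume.restrict S] 0 := by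
    refine (integral_eq_zero_iff_of_nonneg (fun t => abs_nonneg (h t)) hint_abs).mp ?_
    rw [← hK_def]; exact hKzero
  filter_upwards [hae] with t ht
  have h0 : h t = 0 := abs_eq_zero.mp (by simpa using ht)
  rw [hh_def] at h0
  linarith
end

section
/- For every candidate trajectory x, J(x*) ≤ J(x); that is, the Gluskabi raccordation x* built from the two-level control u₀ minimizes the persistence cost J(x) = ∫_a^{b+τ} (x(t) − x(t−τ))² dt over all measurable functions agreeing with x^a on (−∞, a] and with x^b on [b, ∞), for a raccordation interval [a, b] of arbitrary length. (Theorem 2 of the paper.) -/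
open MeasureTheory Set
open scoped ENNReal

lemma glus_shift (g : ℝ → ℝ≥0∞) (c d e : ℝ) :
    ∫⁻ s in Set.Ioc d e, g (s + c) = ∫⁻ t in Set.Ioc (d + c) (e + c), g t := by
  rw [(measurePreserving_add_right volume c).setLIntegral_comp_emb
    (MeasurableEquiv.addRight c).measurableEmbedding g (Set.Ioc d e)]
  simp [Set.image_add_const_Ioc]

lemma glus_tile (h : ℝ → ℝ≥0∞) (a τ : ℝ) (hτ : 0 < τ) : ∀ K : ℕ,
    ∑ k ∈ Finset.range K, ∫⁻ t in Set.Ioc (a + k*τ) (a + (k+1)*τ), h t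
      = ∫⁻ t in Set.Ioc a (a + K*τ), h t := by
  intro K
  induction K with
  | zero => simp
  | succ K ih =>
    rw [Finset.sum_range_succ, ih]
    have h0 : a ≤ a + (K:ℝ)*τ := by nlinarith [Nat.cast_nonneg (α := ℝ) K]
    have h1 : a + (K:ℝ)*τ ≤ a + ((K:ℝ)+1)*τ := by nlinarith
    rw [← lintegral_union measurableSet_Ioc (Set.Ioc_disjoint_Ioc_of_le le_rfl),
      Set.Ioc_union_Ioc_eq_Ioc h0 h1]
    push_cast
    ring_nf

lemma glus_decomp (g : ℝ → ℝ≥0∞) (hg : Measurable g) (a τ : ℝ) (hτ : 0 < τ) (M : ℕ) (c : ℝ)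
    (h2 : c ≤ a + (M+1)*τ) :
    ∫⁻ t in Set.Ioc a c, g t =
      ∫⁻ s in Set.Ioc a (a+τ), ∑ k ∈ Finset.range (M+1), (Set.Ioc a c).indicator g (s + k*τ) := by
  have hind : Measurable ((Set.Ioc a c).indicator g) := hg.indicator measurableSet_Ioc
  have hmeas : ∀ k ∈ Finset.range (M+1),
      Measurable (fun s : ℝ => (Set.Ioc a c).indicator g (s + k*τ)) :=
    fun k _ => hind.comp (measurable_add_const _)
  rw [lintegral_finset_sum _ hmeas]
  have : ∀ k : ℕ, ∫⁻ s in Set.Ioc a (a+τ), (Set.Ioc a c).indicator g (s + k*τ)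
      = ∫⁻ t in Set.Ioc (a + k*τ) (a + (k+1)*τ), (Set.Ioc a c).indicator g t := by
    intro k
    rw [glus_shift]
    congr 1
    ring_nf
  simp_rw [this]
  rw [glus_tile _ _ _ hτ]
  have hsub : Set.Ioc a c ⊆ Set.Ioc a (a + (M+1:ℕ)*τ) := by
    apply Set.Ioc_subset_Ioc_right; push_cast; linarith
  rw [lintegral_indicator measurableSet_Ioc, Measure.restrict_restrict measurableSet_Ioc,
    Set.inter_eq_self_of_subset_left hsub]

lemma glus_per (τ : ℝ) (f : ℝ → ℝ) (hf : ∀ t, f (t+τ) = f t) :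
    ∀ (k : ℕ) (t : ℝ), f (t + (k:ℝ)*τ) = f t := by
  intro k
  induction k with
  | zero => intro t; simp
  | succ k ih =>
    intro t
    have e : t + ((k+1:ℕ):ℝ)*τ = (t + (k:ℝ)*τ) + τ := by push_cast; ring
    rw [e, hf, ih]

lemma glus_cs (m : ℕ) (v : ℕ → ℝ) :
    (v m - v 0)^2 ≤ (m:ℝ) * ∑ k ∈ Finset.range m, (v (k+1) - v k)^2 := by
  have h := Finset.sum_mul_sq_le_sq_mul_sq (Finset.range m) (fun _ => (1:ℝ))
    (fun k => v (k+1) - v k)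
  have e : ∑ k ∈ Finset.range m, (1:ℝ) * (v (k+1) - v k) = v m - v 0 := by
    simp only [one_mul]
    exact Finset.sum_range_sub v m
  rw [e] at h
  simpa using h

lemma glus_chain (m M : ℕ) (hm1 : 1 ≤ m) (hmM : m ≤ M + 1) (u A B : ℝ)
    (P : ℕ → Prop) [DecidablePred P] (hP : ∀ k, k < m → P k)
    (w v : ℕ → ℝ)
    (hw : ∀ j, j ≤ m → w j = A + j * u)
    (hwz : ∀ k, m ≤ k → w (k+1) = w k)
    (hv0 : v 0 = A) (hvm : v m = B) (hBA : B - A = m * u) :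
    ∑ k ∈ Finset.range (M+1), (if P k then (w (k+1) - w k)^2 else 0)
      ≤ ∑ k ∈ Finset.range (M+1), (if P k then (v (k+1) - v k)^2 else 0) := by
  have hL : ∑ k ∈ Finset.range (M+1), (if P k then (w (k+1) - w k)^2 else 0)
      = (m:ℝ) * u^2 := by
    have step : ∀ k ∈ Finset.range (M+1), (if P k then (w (k+1) - w k)^2 else 0)
        = (if k < m then u^2 else 0) := by
      intro k _
      rcases lt_or_ge k m with h | h
      · rw [if_pos (hP k h), if_pos h, hw (k+1) h, hw k h.le]
        push_cast
        ring
      · rw [if_neg (not_lt.2 h)]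
        split_ifs with hp
        · rw [hwz k h]; ring
        · rfl
    rw [Finset.sum_congr rfl step,
      ← Finset.sum_subset (Finset.range_subset_range.2 (by omega : m ≤ M+1))
        (fun x _ hx => if_neg (by simpa using hx))]
    rw [Finset.sum_congr rfl (fun k hk => if_pos (Finset.mem_range.1 hk))]
    simp [mul_comm]
  have hR : (m:ℝ) * u^2 ≤ ∑ k ∈ Finset.range (M+1), (if P k then (v (k+1) - v k)^2 else 0) := by
    have h1 : ∑ k ∈ Finset.range m, (v (k+1) - v k)^2
        ≤ ∑ k ∈ Finset.range (M+1), (if P k then (v (k+1) - v k)^2 else 0) := by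
      calc ∑ k ∈ Finset.range m, (v (k+1) - v k)^2
          = ∑ k ∈ Finset.range m, (if P k then (v (k+1) - v k)^2 else 0) :=
            (Finset.sum_congr rfl (fun k hk => if_pos (hP k (Finset.mem_range.1 hk)))).symm
        _ ≤ _ := Finset.sum_le_sum_of_subset_of_nonneg (Finset.range_subset_range.2 (by omega))
            (fun i _ _ => by split_ifs with h
                             · positivity
                             · exact le_rfl)
    have hcs := glus_cs m v
    rw [hvm, hv0, hBA] at hcs
    have hm0 : (0:ℝ) < m := by exact_mod_cast hm1
    have key : (m:ℝ) * u^2 ≤ ∑ k ∈ Finset.range m, (v (k+1) - v k)^2 := by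
      nlinarith [hcs, hm0]
    linarith [h1, key]
  rw [hL]
  exact hR

set_option maxHeartbeats 1000000 in
/-- Theorem 2 of the paper: for a raccordation interval `[a, b]` of arbitrary length,
with `n = ⌊(b-a)/τ⌋`, the Gluskabi raccordation `x*` built from the two-level control
`u₀` minimizes the persistence cost `J x = ∫_a^{b+τ} (x t - x (t-τ))² dt` over all
measurable candidate trajectories agreeing with the τ-periodic `xa` on `(-∞, a]`
and with the τ-periodic `xb` on `[b, ∞)`. -/
theorem gluskabi_raccordation_general_minimizes
    (τ a b : ℝ) (hτ : 0 < τ) (hab : a < b) (n : ℤ) (hn : n = ⌊(b - a) / τ⌋)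
    (xa xb : ℝ → ℝ) (hxa : Continuous xa) (hxb : Continuous xb)
    (hxa_per : ∀ t, xa (t + τ) = xa t) (hxb_per : ∀ t, xb (t + τ) = xb t)
    (u₀ : ℝ → ℝ)
    (hu₀ : ∀ t, u₀ t =
      if (t - a) - τ * (⌊(t - a) / τ⌋ : ℝ) < b - a - n * τ then
        (xb t - xa t) / ((n : ℝ) + 2)
      else (xb t - xa t) / ((n : ℝ) + 1))
    (xstar : ℝ → ℝ)
    (hxstar_a : ∀ t, t ≤ a → xstar t = xa t)
    (hxstar_mid : ∀ t, a < t → t < b →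
      xstar t = xa t + (1 + (⌊(t - a) / τ⌋ : ℝ)) * u₀ t)
    (hxstar_b : ∀ t, b ≤ t → xstar t = xb t)
    (x : ℝ → ℝ) (hx : Measurable x)
    (hx_a : ∀ t, t ≤ a → x t = xa t) (hx_b : ∀ t, b ≤ t → x t = xb t) :
    (∫⁻ t in Set.Ioc a (b + τ), ENNReal.ofReal ((xstar t - xstar (t - τ)) ^ 2)) ≤
      ∫⁻ t in Set.Ioc a (b + τ), ENNReal.ofReal ((x t - x (t - τ)) ^ 2) := by
  have hn0 : 0 ≤ n := by
    rw [hn]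
    exact Int.floor_nonneg.2 (div_nonneg (by linarith) hτ.le)
  set N : ℕ := n.toNat with hNdef
  have hNn : ((N:ℝ)) = (n:ℝ) := by exact_mod_cast Int.toNat_of_nonneg hn0
  have hfl1 : ((n:ℝ)) * τ ≤ b - a := by
    have := hn ▸ Int.floor_le ((b-a)/τ)
    calc ((n:ℝ)) * τ ≤ ((b-a)/τ) * τ := by nlinarith
      _ = b - a := by field_simp
  have hfl2 : b - a < ((n:ℝ)+1) * τ := by
    have := hn ▸ Int.lt_floor_add_one ((b-a)/τ)
    calc b - a = ((b-a)/τ) * τ := by field_simp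
      _ < ((n:ℝ)+1) * τ := by nlinarith
  have hρ1 : 0 ≤ b - a - (N:ℝ)*τ := by rw [hNn]; linarith
  have hρ2 : b - a - (N:ℝ)*τ < τ := by rw [hNn]; linarith
  set M : ℕ := N + 1 with hMdef
  -- measurability
  have hfloorm : Measurable (fun t : ℝ => ((⌊(t - a) / τ⌋ : ℤ) : ℝ)) := by
    exact (measurable_from_top.comp
      (Int.measurable_floor.comp ((measurable_id.sub_const a).div_const τ)))
  have hu₀m : Measurable u₀ := by
    have : u₀ = fun t => if (t - a) - τ * (⌊(t - a) / τ⌋ : ℝ) < b - a - n * τ then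
        (xb t - xa t) / ((n : ℝ) + 2)
      else (xb t - xa t) / ((n : ℝ) + 1) := funext hu₀
    rw [this]
    exact Measurable.ite
      (measurableSet_lt ((measurable_id.sub_const a).sub (hfloorm.const_mul τ)) measurable_const)
      (((hxb.measurable.sub hxa.measurable).div_const _))
      (((hxb.measurable.sub hxa.measurable).div_const _))
  have hxsm : Measurable xstar := by
    have : xstar = fun t => if t ≤ a then xa t else if t < b then
        xa t + (1 + (⌊(t - a) / τ⌋ : ℝ)) * u₀ t else xb t := by
      funext t
      split_ifs with h1 h2
      · exact hxstar_a t h1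
      · exact hxstar_mid t (lt_of_not_ge h1) h2
      · exact hxstar_b t (le_of_not_gt h2)
    rw [this]
    exact Measurable.ite (measurableSet_le measurable_id measurable_const) hxa.measurable
      (Measurable.ite (measurableSet_lt measurable_id measurable_const)
        (hxa.measurable.add (((measurable_const.add hfloorm)).mul hu₀m))
        hxb.measurable)
  have hgm : ∀ f : ℝ → ℝ, Measurable f →
      Measurable (fun t => ENNReal.ofReal ((f t - f (t - τ)) ^ 2)) :=
    fun f hf => ((hf.sub (hf.comp (measurable_id.sub_const τ))).pow_const 2).ennreal_ofReal
  -- u₀ is τ-periodic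
  have hu₀per : ∀ t, u₀ (t + τ) = u₀ t := by
    intro t
    have hdiv : (t + τ - a) / τ = (t - a)/τ + 1 := by field_simp; ring
    have hfl : ⌊(t + τ - a) / τ⌋ = ⌊(t - a)/τ⌋ + 1 := by
      rw [hdiv]
      exact_mod_cast Int.floor_add_intCast ((t-a)/τ) 1
    rw [hu₀ (t + τ), hu₀ t, hfl, hxa_per, hxb_per]
    have e : (t + τ - a) - τ * ((⌊(t - a)/τ⌋ + 1 : ℤ) : ℝ)
        = (t - a) - τ * ((⌊(t - a)/τ⌋ : ℤ) : ℝ) := by push_cast; ring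
    rw [e]
  -- decompose both integrals
  have hbc2 : b + τ ≤ a + ((M:ℝ)+1)*τ := by
    rw [hMdef]; push_cast; linarith
  rw [glus_decomp _ (hgm _ hxsm) a τ hτ M _ hbc2, glus_decomp _ (hgm _ hx) a τ hτ M _ hbc2]
  apply lintegral_mono_ae
  have hone : ∀ᵐ s : ℝ ∂volume, s ≠ a + τ := by
    rw [ae_iff]
    have e : {s : ℝ | ¬ s ≠ a + τ} = {a + τ} := by ext y; simp
    rw [e]
    exact measure_singleton _
  filter_upwards [ae_restrict_mem measurableSet_Ioc, ae_restrict_of_ae hone] with s hsmem hne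
  have hs1 : a < s := hsmem.1
  have hs2 : s < a + τ := lt_of_le_of_ne hsmem.2 hne
  -- bridge to real sums
  have hbridge : ∀ f : ℝ → ℝ,
      ∑ k ∈ Finset.range (M+1),
          (Set.Ioc a (b+τ)).indicator (fun t => ENNReal.ofReal ((f t - f (t - τ)) ^ 2)) (s + k*τ)
        = ENNReal.ofReal (∑ k ∈ Finset.range (M+1),
            if s + (k:ℝ)*τ ≤ b + τ then
              (f (s + ((k+1:ℕ):ℝ)*τ - τ) - f (s + (k:ℝ)*τ - τ))^2 else 0) := by
    intro f
    rw [ENNReal.ofReal_sum_of_nonneg (fun k _ => by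
      split_ifs with h
      · positivity
      · exact le_rfl)]
    refine Finset.sum_congr rfl fun k _ => ?_
    have hk : a < s + (k:ℝ)*τ := by nlinarith [Nat.cast_nonneg (α := ℝ) k]
    have e1 : s + ((k+1:ℕ):ℝ)*τ - τ = s + (k:ℝ)*τ := by push_cast; ring
    rw [Set.indicator_apply, e1]
    by_cases hbb : s + (k:ℝ)*τ ≤ b + τ
    · rw [if_pos (Set.mem_Ioc.2 ⟨hk, hbb⟩), if_pos hbb]
    · rw [if_neg (fun hmem => hbb (Set.mem_Ioc.1 hmem).2), if_neg hbb, ENNReal.ofReal_zero]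
  rw [hbridge xstar, hbridge x]
  apply ENNReal.ofReal_le_ofReal
  -- discrete chain inequality
  set m : ℕ := if s - a < b - a - (n:ℝ)*τ then N+2 else N+1 with hmdef
  have hm1 : 1 ≤ m := by rw [hmdef]; split_ifs <;> omega
  have hmM : m ≤ M + 1 := by rw [hmdef, hMdef]; split_ifs <;> omega
  have hfloor0 : ⌊(s - a)/τ⌋ = 0 :=
    Int.floor_eq_zero_iff.mpr ⟨div_nonneg (by linarith) hτ.le, by rw [div_lt_one hτ]; linarith⟩
  have hu0s := hu₀ s
  rw [hfloor0] at hu0s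
  norm_num at hu0s
  obtain ⟨key4, key1, key2, key3⟩ :
      (xb s - xa s = (m:ℝ) * u₀ s) ∧ (b ≤ s + ((m:ℝ)-1)*τ) ∧ (s + ((m:ℝ)-1)*τ ≤ b + τ)
        ∧ (∀ j : ℕ, 1 ≤ j → j < m → s + ((j:ℝ)-1)*τ < b) := by
    rcases lt_or_ge (s - a) (b - a - (n:ℝ)*τ) with hc | hc
    · have hmv : m = N + 2 := by rw [hmdef, if_pos hc]
      rw [if_pos hc] at hu0s
      refine ⟨?_, ?_, ?_, ?_⟩
      · rw [hmv, hu0s]; push_cast [← hNn]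
        have h2 : ((N:ℝ)) + 2 ≠ 0 := by positivity
        field_simp
      · rw [hmv]; push_cast; rw [← hNn] at hc; nlinarith
      · rw [hmv]; push_cast; rw [← hNn] at hc; nlinarith
      · intro j h1j hjm
        rw [hmv] at hjm
        have hj : (j:ℝ) ≤ (N:ℝ) + 1 := by exact_mod_cast Nat.lt_succ_iff.mp hjm
        rw [← hNn] at hc
        nlinarith
    · have hmv : m = N + 1 := by rw [hmdef, if_neg (not_lt.2 hc)]
      rw [if_neg (not_lt.2 hc)] at hu0s
      refine ⟨?_, ?_, ?_, ?_⟩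
      · rw [hmv, hu0s]; push_cast [← hNn]
        have h2 : ((N:ℝ)) + 1 ≠ 0 := by positivity
        field_simp
      · rw [hmv]; push_cast; rw [← hNn] at hc; nlinarith
      · rw [hmv]; push_cast; nlinarith
      · intro j h1j hjm
        rw [hmv] at hjm
        have hj : (j:ℝ) ≤ (N:ℝ) := by exact_mod_cast Nat.lt_succ_iff.mp hjm
        have hj1 : (1:ℝ) ≤ (j:ℝ) := by exact_mod_cast h1j
        nlinarith
  have hxas : xa (s - τ) = xa s := by
    have := hxa_per (s - τ); rw [show s - τ + τ = s by ring] at this; exact this.symm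
  -- apply the chain lemma
  refine glus_chain m M hm1 hmM (u₀ s) (xa s) (xb s)
    (fun k => s + (k:ℝ)*τ ≤ b + τ) ?hP
    (fun j => xstar (s + (j:ℝ)*τ - τ)) (fun j => x (s + (j:ℝ)*τ - τ))
    ?hw ?hwz ?hv0 ?hvm key4
  case hP =>
    intro k hk
    have hkm : (k:ℝ) ≤ (m:ℝ) - 1 := by
      have : (k:ℝ) + 1 ≤ (m:ℝ) := by exact_mod_cast hk
      linarith
    nlinarith
  case hw =>
    intro j hj
    show xstar (s + (j:ℝ)*τ - τ) = xa s + (j:ℝ) * u₀ s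
    rcases Nat.eq_zero_or_pos j with rfl | hj1
    · have e : s + ((0:ℕ):ℝ)*τ - τ = s - τ := by push_cast; ring
      rw [e, hxstar_a _ (by linarith), hxas]
      push_cast; ring
    · rcases eq_or_lt_of_le hj with heq | hjm
      · subst heq
        have e : s + (m:ℝ)*τ - τ = s + ((m-1:ℕ):ℝ)*τ := by
          push_cast [Nat.cast_sub hj1]; ring
        have hge : b ≤ s + ((m-1:ℕ):ℝ)*τ := by
          have e2 : s + ((m-1:ℕ):ℝ)*τ = s + ((m:ℝ)-1)*τ := by
            push_cast [Nat.cast_sub hj1]; ring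
          rw [e2]; exact key1
        rw [e, hxstar_b _ hge, glus_per τ xb hxb_per (m-1) s]
        linarith [key4]
      · have e : s + (j:ℝ)*τ - τ = s + ((j-1:ℕ):ℝ)*τ := by
          push_cast [Nat.cast_sub hj1]; ring
        have hj1R : (1:ℝ) ≤ (j:ℝ) := by exact_mod_cast hj1
        have ha' : a < s + (j:ℝ)*τ - τ := by nlinarith
        have hb' : s + (j:ℝ)*τ - τ < b := by
          have := key3 j hj1 hjm
          linarith [show s + (j:ℝ)*τ - τ = s + ((j:ℝ)-1)*τ from by ring]
        rw [hxstar_mid _ ha' hb']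
        have efloor : ⌊(s + (j:ℝ)*τ - τ - a)/τ⌋ = (j:ℤ) - 1 := by
          rw [Int.floor_eq_iff]
          constructor
          · rw [le_div_iff₀ hτ]; push_cast; nlinarith
          · rw [div_lt_iff₀ hτ]; push_cast; nlinarith
        rw [efloor]
        have exa : xa (s + (j:ℝ)*τ - τ) = xa s := by
          rw [e]; exact glus_per τ xa hxa_per (j-1) s
        have eu : u₀ (s + (j:ℝ)*τ - τ) = u₀ s := by
          rw [e]; exact glus_per τ u₀ hu₀per (j-1) s
        rw [exa, eu]
        push_cast; ring
  case hwz =>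
    intro k hk
    show xstar (s + ((k+1:ℕ):ℝ)*τ - τ) = xstar (s + (k:ℝ)*τ - τ)
    have hmk : (m:ℝ) ≤ (k:ℝ) := by exact_mod_cast hk
    have hbk : b ≤ s + (k:ℝ)*τ - τ := by nlinarith [key1]
    have e1 : s + ((k+1:ℕ):ℝ)*τ - τ = (s + (k:ℝ)*τ - τ) + τ := by push_cast; ring
    rw [e1, hxstar_b _ hbk, hxstar_b _ (by linarith)]
    exact hxb_per (s + (k:ℝ)*τ - τ)
  case hv0 =>
    show x (s + ((0:ℕ):ℝ)*τ - τ) = xa s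
    have e : s + ((0:ℕ):ℝ)*τ - τ = s - τ := by push_cast; ring
    rw [e, hx_a _ (by linarith), hxas]
  case hvm =>
    show x (s + (m:ℝ)*τ - τ) = xb s
    have e : s + (m:ℝ)*τ - τ = s + ((m-1:ℕ):ℝ)*τ := by
      push_cast [Nat.cast_sub hm1]; ring
    have hge : b ≤ s + ((m-1:ℕ):ℝ)*τ := by
      have e2 : s + ((m-1:ℕ):ℝ)*τ = s + ((m:ℝ)-1)*τ := by
        push_cast [Nat.cast_sub hm1]; ring
      rw [e2]; exact key1
    rw [e, hx_b _ hge]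
    exact glus_per τ xb hxb_per (m-1) s
end

section
/- The minimal persistence cost of Theorem 2 equals J(x*) = (1/(n+2)) · ∫_a^{b−nτ} (x^b(θ) − x^a(θ))² dθ + (1/(n+1)) · ∫_{b−nτ}^{a+τ} (x^b(θ) − x^a(θ))² dθ. -/
open MeasureTheory
open scoped ENNReal

private lemma lint_trans (g : ℝ → ℝ≥0∞) (c : ℝ) :
    ∫⁻ t : ℝ, g (t - c) = ∫⁻ t : ℝ, g t := by
  have h := MeasureTheory.lintegral_map_equiv (μ := (volume : Measure ℝ)) g
    (MeasurableEquiv.addRight (-c))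
  simp only [MeasurableEquiv.coe_addRight,
    map_add_right_eq_self (volume : Measure ℝ) (-c)] at h
  rw [h]
  simp [sub_eq_add_neg]

private lemma lint_shift (f : ℝ → ℝ≥0∞) (c p q : ℝ) :
    (∫⁻ t in Set.Ioc p q, f (t - c)) = ∫⁻ t in Set.Ioc (p - c) (q - c), f t := by
  rw [← lintegral_indicator measurableSet_Ioc, ← lintegral_indicator measurableSet_Ioc]
  rw [← lint_trans ((Set.Ioc (p - c) (q - c)).indicator f) c]
  refine lintegral_congr fun t => ?_
  by_cases h : t ∈ Set.Ioc p q
  · rw [Set.indicator_of_mem h, Set.indicator_of_mem]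
    simp only [Set.mem_Ioc] at h ⊢
    constructor <;> linarith [h.1, h.2]
  · rw [Set.indicator_of_notMem h, Set.indicator_of_notMem]
    simp only [Set.mem_Ioc, not_and_or, not_le, not_lt] at h ⊢
    rcases h with h | h
    · left; linarith
    · right; linarith

private lemma lint_split (f : ℝ → ℝ≥0∞) {p q r : ℝ} (h1 : p ≤ q) (h2 : q ≤ r) :
    ∫⁻ t in Set.Ioc p r, f t = (∫⁻ t in Set.Ioc p q, f t) + ∫⁻ t in Set.Ioc q r, f t := by
  rw [← Set.Ioc_union_Ioc_eq_Ioc h1 h2,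
    lintegral_union measurableSet_Ioc (Set.Ioc_disjoint_Ioc_of_le le_rfl)]

section Periodic

variable {g : ℝ → ℝ≥0∞} {τ : ℝ}

private lemma per_shift (hg : ∀ t, g (t + τ) = g t) (p q : ℝ) :
    ∫⁻ t in Set.Ioc (p + τ) (q + τ), g t = ∫⁻ t in Set.Ioc p q, g t := by
  have h1 : ∀ t : ℝ, g t = g (t - τ) := by
    intro t
    conv_lhs => rw [show t = (t - τ) + τ by ring, hg]
  calc ∫⁻ t in Set.Ioc (p + τ) (q + τ), g t
      = ∫⁻ t in Set.Ioc (p + τ) (q + τ), g (t - τ) := by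
        exact lintegral_congr fun t => h1 t
    _ = ∫⁻ t in Set.Ioc (p + τ - τ) (q + τ - τ), g t := lint_shift g τ _ _
    _ = ∫⁻ t in Set.Ioc p q, g t := by norm_num

private lemma per_shift_int (hg : ∀ t, g (t + τ) = g t) (p q : ℝ) (k : ℤ) :
    ∫⁻ t in Set.Ioc (p + k * τ) (q + k * τ), g t = ∫⁻ t in Set.Ioc p q, g t := by
  induction k using Int.induction_on with
  | zero => norm_num
  | succ k ih =>
      have e : ∀ x : ℝ, x + ((k : ℝ) + 1) * τ = (x + k * τ) + τ := by intro x; ring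
      push_cast at ih ⊢
      rw [e p, e q, per_shift hg, ih]
  | pred k ih =>
      have e : ∀ x : ℝ, x + (-(k : ℝ) - 1) * τ + τ = x + -(k : ℝ) * τ := by intro x; ring
      push_cast at ih ⊢
      rw [← per_shift hg (p + (-(k:ℝ) - 1) * τ) (q + (-(k:ℝ) - 1) * τ), e p, e q, ih]

private lemma per_interval (hτ : 0 < τ) (hg : ∀ t, g (t + τ) = g t) (c d : ℝ) :
    ∫⁻ t in Set.Ioc c (c + τ), g t = ∫⁻ t in Set.Ioc d (d + τ), g t := by
  set k : ℤ := ⌊(d - c) / τ⌋ with hk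
  set d' : ℝ := d - k * τ with hd'
  have hkl : (k : ℝ) * τ ≤ d - c := (le_div_iff₀ hτ).mp (Int.floor_le _)
  have hku : d - c < ((k : ℝ) + 1) * τ := (div_lt_iff₀ hτ).mp (Int.lt_floor_add_one _)
  have h1 : c ≤ d' := by rw [hd']; linarith
  have h2 : d' ≤ c + τ := by rw [hd']; nlinarith
  have hI : ∫⁻ t in Set.Ioc d (d + τ), g t = ∫⁻ t in Set.Ioc d' (d' + τ), g t := by
    have := per_shift_int hg d' (d' + τ) k
    rw [show d' + (k:ℝ) * τ = d by rw [hd']; ring] at this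
    rw [show d' + τ + (k:ℝ) * τ = d + τ by rw [hd']; ring] at this
    exact this
  rw [hI]
  have L1 : ∫⁻ t in Set.Ioc c (c + τ), g t
      = (∫⁻ t in Set.Ioc c d', g t) + ∫⁻ t in Set.Ioc d' (c + τ), g t :=
    lint_split g h1 h2
  have L2 : ∫⁻ t in Set.Ioc d' (d' + τ), g t
      = (∫⁻ t in Set.Ioc d' (c + τ), g t) + ∫⁻ t in Set.Ioc (c + τ) (d' + τ), g t :=
    lint_split g h2 (by linarith)
  have L3 : ∫⁻ t in Set.Ioc (c + τ) (d' + τ), g t = ∫⁻ t in Set.Ioc c d', g t :=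
    per_shift hg c d'
  rw [L1, L2, L3, add_comm]

private lemma per_nfold (hτ : 0 < τ) (hg : ∀ t, g (t + τ) = g t) :
    ∀ (m : ℕ) (x : ℝ), ∫⁻ t in Set.Ioc x (x + m * τ), g t
      = m * ∫⁻ t in Set.Ioc x (x + τ), g t := by
  intro m
  induction m with
  | zero => intro x; norm_num
  | succ m ih =>
      intro x
      have h1 : x ≤ x + τ := by linarith
      have h2 : x + τ ≤ x + (m + 1 : ℕ) * τ := by
        push_cast
        nlinarith [mul_nonneg (Nat.cast_nonneg (α := ℝ) m) hτ.le]
      rw [lint_split g h1 h2]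
      have e : x + ((m + 1 : ℕ) : ℝ) * τ = (x + τ) + (m : ℝ) * τ := by push_cast; ring
      rw [e, ih (x + τ), per_interval hτ hg (x + τ) x]
      push_cast
      ring

end Periodic

/-- The minimal persistence cost of Theorem 2:
`J(x*) = (1/(n+2)) ∫_a^{b-nτ} (x^b θ - x^a θ)² dθ
       + (1/(n+1)) ∫_{b-nτ}^{a+τ} (x^b θ - x^a θ)² dθ`. -/
theorem gluskabi_raccordation_general_cost
    (τ a b : ℝ) (hτ : 0 < τ) (hab : a < b) (n : ℤ) (hn : n = ⌊(b - a) / τ⌋)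
    (xa xb : ℝ → ℝ) (hxa : Continuous xa) (hxb : Continuous xb)
    (hxa_per : ∀ t, xa (t + τ) = xa t) (hxb_per : ∀ t, xb (t + τ) = xb t)
    (u₀ : ℝ → ℝ)
    (hu₀ : ∀ t, u₀ t =
      if (t - a) - τ * (⌊(t - a) / τ⌋ : ℝ) < b - a - n * τ then
        (xb t - xa t) / ((n : ℝ) + 2)
      else (xb t - xa t) / ((n : ℝ) + 1))
    (xstar : ℝ → ℝ)
    (hxstar_a : ∀ t, t ≤ a → xstar t = xa t)
    (hxstar_mid : ∀ t, a < t → t < b →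
      xstar t = xa t + (1 + (⌊(t - a) / τ⌋ : ℝ)) * u₀ t)
    (hxstar_b : ∀ t, b ≤ t → xstar t = xb t) :
    (∫⁻ t in Set.Ioc a (b + τ), ENNReal.ofReal ((xstar t - xstar (t - τ)) ^ 2)) =
      (ENNReal.ofReal (1 / ((n : ℝ) + 2))) *
          (∫⁻ θ in Set.Ioc a (b - n * τ), ENNReal.ofReal ((xb θ - xa θ) ^ 2)) +
        (ENNReal.ofReal (1 / ((n : ℝ) + 1))) *
          ∫⁻ θ in Set.Ioc (b - n * τ) (a + τ), ENNReal.ofReal ((xb θ - xa θ) ^ 2) := by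
  -- basic bounds
  have hn0 : (0:ℤ) ≤ n := by
    rw [hn]; exact Int.floor_nonneg.mpr (div_nonneg (by linarith) hτ.le)
  have hnR : (0:ℝ) ≤ (n:ℝ) := by exact_mod_cast hn0
  have hl : (n:ℝ) * τ ≤ b - a := by
    have h := Int.floor_le ((b - a) / τ); rw [← hn] at h
    exact (le_div_iff₀ hτ).mp h
  have hu : b - a < ((n:ℝ) + 1) * τ := by
    have h := Int.lt_floor_add_one ((b - a) / τ); rw [← hn] at h
    exact (div_lt_iff₀ hτ).mp h
  have h2ne : ((n:ℝ) + 2) ≠ 0 := by positivity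
  have h1ne : ((n:ℝ) + 1) ≠ 0 := by positivity
  -- periodicity in subtracted form
  have hxa_per' : ∀ t, xa (t - τ) = xa t := fun t => by
    conv_rhs => rw [show t = (t - τ) + τ by ring, hxa_per]
  have hxb_per' : ∀ t, xb (t - τ) = xb t := fun t => by
    conv_rhs => rw [show t = (t - τ) + τ by ring, hxb_per]
  have hu₀_per : ∀ t, u₀ (t - τ) = u₀ t := by
    intro t
    rw [hu₀, hu₀]
    have e2 : ⌊(t - τ - a) / τ⌋ = ⌊(t - a) / τ⌋ - 1 := by
      rw [show (t - τ - a) / τ = (t - a) / τ - 1 by field_simp; ring, Int.floor_sub_one]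
    rw [e2, hxa_per', hxb_per']
    push_cast
    rw [show t - τ - a - τ * ((⌊(t - a) / τ⌋ : ℝ) - 1)
        = t - a - τ * (⌊(t - a) / τ⌋ : ℝ) by ring]
  have hUper : ∀ t : ℝ, ENNReal.ofReal (u₀ (t + τ) ^ 2) = ENNReal.ofReal (u₀ t ^ 2) := by
    intro t
    have := hu₀_per (t + τ)
    simp only [add_sub_cancel_right] at this
    rw [this]
  -- floor vanishing
  have hfloor0 : ∀ θ : ℝ, a < θ → θ - a < τ → ⌊(θ - a) / τ⌋ = 0 := by
    intro θ h1 h2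
    rw [Int.floor_eq_zero_iff]
    exact ⟨div_nonneg (by linarith) hτ.le, (div_lt_one hτ).mpr h2⟩
  -- values of u₀ on the fundamental domain
  have hu₀_lo : ∀ θ : ℝ, a < θ → θ < b - n * τ → u₀ θ = (xb θ - xa θ) / ((n:ℝ) + 2) := by
    intro θ h1 h2
    have hc : (θ - a) - τ * ((⌊(θ - a) / τ⌋ : ℤ) : ℝ) < b - a - n * τ := by
      rw [hfloor0 θ h1 (by linarith)]; push_cast; linarith
    rw [hu₀, if_pos hc]
  have hu₀_hi : ∀ θ : ℝ, b - n * τ < θ → θ < a + τ → u₀ θ = (xb θ - xa θ) / ((n:ℝ) + 1) := by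
    intro θ h1 h2
    have h1' : a < θ := by nlinarith
    have hc : ¬ ((θ - a) - τ * ((⌊(θ - a) / τ⌋ : ℤ) : ℝ) < b - a - n * τ) := by
      rw [hfloor0 θ h1' (by linarith)]; push_cast; linarith
    rw [hu₀, if_neg hc]
  -- the key pointwise identities
  have keyA : ∀ t : ℝ, a < t → t < b → t ≠ a + τ → xstar t - xstar (t - τ) = u₀ t := by
    intro t h1 h2 h3
    by_cases hc : t - τ ≤ a
    · have h4 : t < a + τ := lt_of_le_of_ne (by linarith) h3
      have hf : ⌊(t - a) / τ⌋ = 0 := hfloor0 t h1 (by linarith)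
      rw [hxstar_mid t h1 h2, hxstar_a _ hc, hf, hxa_per']
      push_cast; ring
    · push_neg at hc
      have h5 : t - τ < b := by linarith
      rw [hxstar_mid t h1 h2, hxstar_mid (t - τ) hc h5]
      have e2 : ⌊(t - τ - a) / τ⌋ = ⌊(t - a) / τ⌋ - 1 := by
        rw [show (t - τ - a) / τ = (t - a) / τ - 1 by field_simp; ring, Int.floor_sub_one]
      rw [e2, hxa_per', hu₀_per]
      push_cast; ring
  have keyB : ∀ t : ℝ, b < t → t < b + τ → t ≠ a + τ →
      xstar t - xstar (t - τ) = u₀ (t - τ) := by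
    intro t h1 h2 h3
    have hxb' : xb (t - τ) = xb t := hxb_per' t
    rw [hxstar_b t h1.le]
    rcases lt_trichotomy (t - τ) a with hs | hs | hs
    · -- the case n = 0, t - τ < a
      have hbound : b - a < τ := by linarith
      have hn0' : n = 0 := by
        rw [hn, Int.floor_eq_zero_iff]
        exact ⟨div_nonneg (by linarith) hτ.le, (div_lt_one hτ).mpr hbound⟩
      have hfm1 : ⌊(t - τ - a) / τ⌋ = -1 := by
        rw [Int.floor_eq_iff]
        constructor
        · push_cast
          rw [le_div_iff₀ hτ]; linarith
        · push_cast
          rw [div_lt_iff₀ hτ]; linarith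
      have hcond : ¬ ((t - τ - a) - τ * ((⌊(t - τ - a) / τ⌋ : ℤ) : ℝ) < b - a - n * τ) := by
        rw [hfm1, hn0']; push_cast; linarith
      rw [hxstar_a _ hs.le, hu₀ (t - τ), if_neg hcond, hn0', hxb']
      push_cast; ring
    · exact absurd (by linarith : t = a + τ) h3
    · -- a < t - τ < b
      have hs2 : t - τ < b := by linarith
      rw [hxstar_mid (t - τ) hs hs2]
      by_cases hk : (n:ℝ) * τ ≤ t - τ - a
      · have hf : ⌊(t - τ - a) / τ⌋ = n := by
          rw [Int.floor_eq_iff]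
          constructor
          · rw [le_div_iff₀ hτ]; linarith
          · push_cast; rw [div_lt_iff₀ hτ]; nlinarith
        have hcond : (t - τ - a) - τ * ((⌊(t - τ - a) / τ⌋ : ℤ) : ℝ) < b - a - n * τ := by
          rw [hf]; linarith
        rw [hu₀ (t - τ), if_pos hcond, hf, hxb']
        field_simp
        ring
      · push_neg at hk
        have hge1 : (1:ℝ) ≤ (n:ℝ) := by
          by_contra hcon
          push_neg at hcon
          have : (n:ℝ) = 0 := by
            have : n < 1 := by exact_mod_cast hcon
            have : n ≤ 0 := by omega
            have : n = 0 := le_antisymm this hn0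
            exact_mod_cast this
          rw [this] at hk; simp at hk; linarith
        have hf : ⌊(t - τ - a) / τ⌋ = n - 1 := by
          rw [Int.floor_eq_iff]
          constructor
          · push_cast; rw [le_div_iff₀ hτ]; nlinarith
          · push_cast; rw [div_lt_iff₀ hτ]; linarith
        have hcond : ¬ ((t - τ - a) - τ * ((⌊(t - τ - a) / τ⌋ : ℤ) : ℝ) < b - a - n * τ) := by
          rw [hf]; push_cast; nlinarith
        rw [hu₀ (t - τ), if_neg hcond, hf, hxb']
        push_cast
        field_simp
        ring
  -- a.e. identification of Ioc with Ioo minus the bad point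
  have hset : ∀ p q : ℝ, (Set.Ioc p q : Set ℝ)
      =ᵐ[volume] (Set.Ioo p q \ {a + τ} : Set ℝ) := by
    intro p q
    rw [MeasureTheory.ae_eq_set]
    constructor
    · refine measure_mono_null (fun t ht => ?_)
        ((((Set.finite_singleton (a + τ)).insert q).countable).measure_zero volume)
      rcases ht with ⟨ht1, ht2⟩
      simp only [Set.mem_diff, Set.mem_Ioo, Set.mem_singleton_iff, not_and, not_not] at ht2
      rcases eq_or_lt_of_le ht1.2 with hq | hq
      · exact Set.mem_insert_iff.mpr (Or.inl hq)
      · exact Set.mem_insert_iff.mpr (Or.inr (ht2 ⟨ht1.1, hq⟩))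
    · have he : ((Set.Ioo p q \ {a + τ}) \ Set.Ioc p q : Set ℝ) = ∅ := by
        rw [Set.diff_eq_empty]
        exact fun t ht => Set.Ioo_subset_Ioc_self ht.1
      rw [he]; exact measure_empty
  have hmeasS : ∀ p q : ℝ, MeasurableSet (Set.Ioo p q \ {a + τ} : Set ℝ) :=
    fun p q => measurableSet_Ioo.diff (measurableSet_singleton _)
  -- step A : the part over (a, b]
  have hA : (∫⁻ t in Set.Ioc a b, ENNReal.ofReal ((xstar t - xstar (t - τ)) ^ 2))
      = ∫⁻ t in Set.Ioc a b, ENNReal.ofReal (u₀ t ^ 2) := by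
    rw [setLIntegral_congr (hset a b),
        setLIntegral_congr (μ := volume) (f := fun t => ENNReal.ofReal (u₀ t ^ 2)) (hset a b)]
    refine setLIntegral_congr_fun (hmeasS a b) (fun t ht => ?_)
    rcases ht with ⟨ht1, ht2⟩
    rw [keyA t ht1.1 ht1.2 ht2]
  -- step B : the part over (b, b+τ]
  have hB : (∫⁻ t in Set.Ioc b (b + τ), ENNReal.ofReal ((xstar t - xstar (t - τ)) ^ 2))
      = ∫⁻ t in Set.Ioc b (b + τ), ENNReal.ofReal (u₀ (t - τ) ^ 2) := by
    rw [setLIntegral_congr (hset b (b + τ)),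
        setLIntegral_congr (μ := volume) (f := fun t => ENNReal.ofReal (u₀ (t - τ) ^ 2))
          (hset b (b + τ))]
    refine setLIntegral_congr_fun (hmeasS b (b + τ)) (fun t ht => ?_)
    rcases ht with ⟨ht1, ht2⟩
    rw [keyB t ht1.1 ht1.2 ht2]
  -- shift the second part back
  have hB2 : (∫⁻ t in Set.Ioc b (b + τ), ENNReal.ofReal (u₀ (t - τ) ^ 2))
      = ∫⁻ t in Set.Ioc (b - τ) b, ENNReal.ofReal (u₀ t ^ 2) := by
    have := lint_shift (fun t => ENNReal.ofReal (u₀ t ^ 2)) τ b (b + τ)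
    simpa using this
  -- interval arithmetic facts
  have hbn1 : a ≤ b - n * τ := by nlinarith
  have hbn2 : b - n * τ ≤ a + τ := by nlinarith
  have hbn3 : b - n * τ ≤ b := by nlinarith
  -- values of the two pieces of the fundamental-domain integral
  have hI1 : (∫⁻ θ in Set.Ioc a (b - n * τ), ENNReal.ofReal (u₀ θ ^ 2))
      = ENNReal.ofReal (1 / ((n:ℝ) + 2) ^ 2) *
        ∫⁻ θ in Set.Ioc a (b - n * τ), ENNReal.ofReal ((xb θ - xa θ) ^ 2) := by
    rw [← setLIntegral_congr (μ := volume) (f := fun θ => ENNReal.ofReal (u₀ θ ^ 2))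
          (Ioo_ae_eq_Ioc (a := a) (b := b - n * τ)),
        ← setLIntegral_congr (μ := volume) (f := fun θ => ENNReal.ofReal ((xb θ - xa θ) ^ 2))
          (Ioo_ae_eq_Ioc (a := a) (b := b - n * τ)),
        ← lintegral_const_mul' _ _ ENNReal.ofReal_ne_top]
    refine setLIntegral_congr_fun measurableSet_Ioo (fun θ hθ => ?_)
    rw [hu₀_lo θ hθ.1 hθ.2, div_pow,
      show (xb θ - xa θ) ^ 2 / ((n:ℝ) + 2) ^ 2
        = (1 / ((n:ℝ) + 2) ^ 2) * (xb θ - xa θ) ^ 2 by ring,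
      ENNReal.ofReal_mul (by positivity)]
  have hI2 : (∫⁻ θ in Set.Ioc (b - n * τ) (a + τ), ENNReal.ofReal (u₀ θ ^ 2))
      = ENNReal.ofReal (1 / ((n:ℝ) + 1) ^ 2) *
        ∫⁻ θ in Set.Ioc (b - n * τ) (a + τ), ENNReal.ofReal ((xb θ - xa θ) ^ 2) := by
    rw [← setLIntegral_congr (μ := volume) (f := fun θ => ENNReal.ofReal (u₀ θ ^ 2))
          (Ioo_ae_eq_Ioc (a := b - n * τ) (b := a + τ)),
        ← setLIntegral_congr (μ := volume) (f := fun θ => ENNReal.ofReal ((xb θ - xa θ) ^ 2))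
          (Ioo_ae_eq_Ioc (a := b - n * τ) (b := a + τ)),
        ← lintegral_const_mul' _ _ ENNReal.ofReal_ne_top]
    refine setLIntegral_congr_fun measurableSet_Ioo (fun θ hθ => ?_)
    rw [hu₀_hi θ hθ.1 hθ.2, div_pow,
      show (xb θ - xa θ) ^ 2 / ((n:ℝ) + 1) ^ 2
        = (1 / ((n:ℝ) + 1) ^ 2) * (xb θ - xa θ) ^ 2 by ring,
      ENNReal.ofReal_mul (by positivity)]
  -- the fundamental-domain integral
  have hIper : (∫⁻ θ in Set.Ioc a (a + τ), ENNReal.ofReal (u₀ θ ^ 2))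
      = (∫⁻ θ in Set.Ioc a (b - n * τ), ENNReal.ofReal (u₀ θ ^ 2)) +
        ∫⁻ θ in Set.Ioc (b - n * τ) (a + τ), ENNReal.ofReal (u₀ θ ^ 2) :=
    lint_split _ hbn1 hbn2
  -- the shifted tail equals the fundamental-domain integral
  have hTail : (∫⁻ θ in Set.Ioc (b - τ) b, ENNReal.ofReal (u₀ θ ^ 2))
      = ∫⁻ θ in Set.Ioc a (a + τ), ENNReal.ofReal (u₀ θ ^ 2) := by
    have := per_interval (g := fun θ => ENNReal.ofReal (u₀ θ ^ 2)) hτ hUper (b - τ) a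
    rw [show b - τ + τ = b by ring] at this
    exact this
  -- the middle part : n full periods
  set m : ℕ := n.toNat with hm
  have hmR : ((m:ℝ)) = (n:ℝ) := by
    rw [hm]; exact_mod_cast congrArg (Int.cast : ℤ → ℝ) (Int.toNat_of_nonneg hn0)
  have hMid : (∫⁻ θ in Set.Ioc (b - n * τ) b, ENNReal.ofReal (u₀ θ ^ 2))
      = (m : ℝ≥0∞) * ∫⁻ θ in Set.Ioc a (a + τ), ENNReal.ofReal (u₀ θ ^ 2) := by
    have hb : b = (b - n * τ) + (m : ℝ) * τ := by rw [hmR]; ring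
    calc (∫⁻ θ in Set.Ioc (b - n * τ) b, ENNReal.ofReal (u₀ θ ^ 2))
        = ∫⁻ θ in Set.Ioc (b - n * τ) ((b - n * τ) + (m:ℝ) * τ), ENNReal.ofReal (u₀ θ ^ 2) := by
          rw [← hb]
      _ = (m : ℝ≥0∞) * ∫⁻ θ in Set.Ioc (b - n * τ) ((b - n * τ) + τ),
            ENNReal.ofReal (u₀ θ ^ 2) :=
          per_nfold (g := fun θ => ENNReal.ofReal (u₀ θ ^ 2)) hτ hUper m (b - n * τ)
      _ = (m : ℝ≥0∞) * ∫⁻ θ in Set.Ioc a (a + τ), ENNReal.ofReal (u₀ θ ^ 2) := by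
          rw [per_interval (g := fun θ => ENNReal.ofReal (u₀ θ ^ 2)) hτ hUper (b - n * τ) a]
  -- assemble
  have hsplit : (∫⁻ t in Set.Ioc a (b + τ), ENNReal.ofReal ((xstar t - xstar (t - τ)) ^ 2))
      = (∫⁻ t in Set.Ioc a b, ENNReal.ofReal ((xstar t - xstar (t - τ)) ^ 2)) +
        ∫⁻ t in Set.Ioc b (b + τ), ENNReal.ofReal ((xstar t - xstar (t - τ)) ^ 2) :=
    lint_split _ hab.le (by linarith)
  have hABsplit : (∫⁻ t in Set.Ioc a b, ENNReal.ofReal (u₀ t ^ 2))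
      = (∫⁻ θ in Set.Ioc a (b - n * τ), ENNReal.ofReal (u₀ θ ^ 2)) +
        ∫⁻ θ in Set.Ioc (b - n * τ) b, ENNReal.ofReal (u₀ θ ^ 2) :=
    lint_split _ hbn1 hbn3
  -- coefficient identities
  have hcast2 : ((m : ℝ≥0∞) + 2) = ENNReal.ofReal ((n:ℝ) + 2) := by
    rw [← hmR, show ((m:ℝ) + 2) = ((m + 2 : ℕ) : ℝ) by push_cast; ring,
      ENNReal.ofReal_natCast]
    push_cast; ring
  have hcast1 : ((m : ℝ≥0∞) + 1) = ENNReal.ofReal ((n:ℝ) + 1) := by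
    rw [← hmR, show ((m:ℝ) + 1) = ((m + 1 : ℕ) : ℝ) by push_cast; ring,
      ENNReal.ofReal_natCast]
    push_cast; ring
  have key2 : ((m : ℝ≥0∞) + 2) * ENNReal.ofReal (1 / ((n:ℝ) + 2) ^ 2)
      = ENNReal.ofReal (1 / ((n:ℝ) + 2)) := by
    rw [hcast2, ← ENNReal.ofReal_mul (by positivity)]
    congr 1
    field_simp
  have key1 : ((m : ℝ≥0∞) + 1) * ENNReal.ofReal (1 / ((n:ℝ) + 1) ^ 2)
      = ENNReal.ofReal (1 / ((n:ℝ) + 1)) := by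
    rw [hcast1, ← ENNReal.ofReal_mul (by positivity)]
    congr 1
    field_simp
  rw [hsplit, hA, hB, hB2, hTail, hABsplit, hMid, hIper, hI1, hI2, ← key2, ← key1]
  ring
end

section
/- If a candidate trajectory x satisfies J(x) = J(x*), i.e., x achieves the minimal persistence cost of Theorem 2, then x(t) = x*(t) for almost every t ∈ ℝ. (Uniqueness of the Gluskabi raccordation of Theorem 2 up to null sets.) -/
open MeasureTheory
open scoped ENNReal

/-- L² expansion: if `∫ f² = ∫ u²` (as lintegrals), `u` bounded, and the cross term
`∫ u (f - u) = 0`, then `f = u` a.e. -/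
lemma l2_ae_eq {μ : Measure ℝ} [IsFiniteMeasure μ] {f u : ℝ → ℝ} {M : ℝ}
    (hf : Measurable f) (hu : Measurable u) (hub : ∀ t, |u t| ≤ M)
    (hlint : ∫⁻ t, ENNReal.ofReal (f t ^ 2) ∂μ = ∫⁻ t, ENNReal.ofReal (u t ^ 2) ∂μ)
    (hcross : ∫ t, u t * (f t - u t) ∂μ = 0) :
    f =ᵐ[μ] u := by
  have hu2int : Integrable (fun t => u t ^ 2) μ := by
    refine Integrable.mono' (integrable_const (M ^ 2)) ((hu.pow_const 2).aestronglyMeasurable)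
      (Filter.Eventually.of_forall fun t => ?_)
    rw [Real.norm_eq_abs, abs_of_nonneg (sq_nonneg _)]
    have h := hub t
    nlinarith [abs_nonneg (u t), sq_abs (u t)]
  have hu2lt : ∫⁻ t, ENNReal.ofReal (u t ^ 2) ∂μ < ⊤ := hu2int.lintegral_lt_top
  have hf2int : Integrable (fun t => f t ^ 2) μ := by
    refine ⟨(hf.pow_const 2).aestronglyMeasurable, ?_⟩
    rw [hasFiniteIntegral_iff_ofReal (Filter.Eventually.of_forall fun t => sq_nonneg _)]
    rw [hlint]; exact hu2lt
  have hfint : Integrable f μ := by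
    refine Integrable.mono' ((integrable_const 1).add hf2int) hf.aestronglyMeasurable
      (Filter.Eventually.of_forall fun t => ?_)
    simp only [Pi.add_apply, Real.norm_eq_abs]
    nlinarith [sq_nonneg (|f t| - 1), sq_abs (f t), abs_nonneg (f t)]
  have hufint : Integrable (fun t => u t * f t) μ :=
    hfint.bdd_mul hu.aestronglyMeasurable (Filter.Eventually.of_forall fun t => by rw [Real.norm_eq_abs]; exact hub t)
  have hint_eq : ∫ t, f t ^ 2 ∂μ = ∫ t, u t ^ 2 ∂μ := by
    rw [integral_eq_lintegral_of_nonneg_ae (Filter.Eventually.of_forall fun t => sq_nonneg _)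
        (hf.pow_const 2).aestronglyMeasurable,
      integral_eq_lintegral_of_nonneg_ae (Filter.Eventually.of_forall fun t => sq_nonneg _)
        (hu.pow_const 2).aestronglyMeasurable, hlint]
  have huf_eq : ∫ t, u t * f t ∂μ = ∫ t, u t ^ 2 ∂μ := by
    have h1 : ∫ t, u t * (f t - u t) ∂μ = ∫ t, u t * f t ∂μ - ∫ t, u t ^ 2 ∂μ := by
      rw [← integral_sub hufint hu2int]
      exact integral_congr_ae (Filter.Eventually.of_forall fun t => by ring)
    rw [h1] at hcross
    linarith
  have hdiff_int : Integrable (fun t => f t ^ 2 - 2 * (u t * f t)) μ := by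
    exact hf2int.sub (hufint.const_mul 2)
  have hsq_int : Integrable (fun t => (f t - u t) ^ 2) μ := by
    have : Integrable (fun t => f t ^ 2 - 2 * (u t * f t) + u t ^ 2) μ := hdiff_int.add hu2int
    exact this.congr (Filter.Eventually.of_forall fun t => by ring)
  have hsq_zero : ∫ t, (f t - u t) ^ 2 ∂μ = 0 := by
    have h2 : ∫ t, (f t - u t) ^ 2 ∂μ
        = ∫ t, (f t ^ 2 - 2 * (u t * f t) + u t ^ 2) ∂μ :=
      integral_congr_ae (Filter.Eventually.of_forall fun t => by ring)
    rw [h2, integral_add hdiff_int hu2int,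
      integral_sub hf2int (hufint.const_mul 2), MeasureTheory.integral_const_mul, hint_eq, huf_eq]
    ring
  have := (integral_eq_zero_iff_of_nonneg (fun t => sq_nonneg (f t - u t)) hsq_int).mp hsq_zero
  filter_upwards [this] with t ht
  have : (f t - u t) ^ 2 = 0 := ht
  have := pow_eq_zero_iff (n := 2) (by norm_num) |>.mp this
  linarith

/-- Uniqueness of the Gluskabi raccordation of Theorem 2 up to null sets: any candidate
trajectory achieving the minimal persistence cost `J(x*)` agrees with `x*` almost
everywhere. -/
theorem gluskabi_raccordation_general_unique
    (τ a b : ℝ) (hτ : 0 < τ) (hab : a < b) (n : ℤ) (hn : n = ⌊(b - a) / τ⌋)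
    (xa xb : ℝ → ℝ) (hxa : Continuous xa) (hxb : Continuous xb)
    (hxa_per : ∀ t, xa (t + τ) = xa t) (hxb_per : ∀ t, xb (t + τ) = xb t)
    (u₀ : ℝ → ℝ)
    (hu₀ : ∀ t, u₀ t =
      if (t - a) - τ * (⌊(t - a) / τ⌋ : ℝ) < b - a - n * τ then
        (xb t - xa t) / ((n : ℝ) + 2)
      else (xb t - xa t) / ((n : ℝ) + 1))
    (xstar : ℝ → ℝ)
    (hxstar_a : ∀ t, t ≤ a → xstar t = xa t)
    (hxstar_mid : ∀ t, a < t → t < b →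
      xstar t = xa t + (1 + (⌊(t - a) / τ⌋ : ℝ)) * u₀ t)
    (hxstar_b : ∀ t, b ≤ t → xstar t = xb t)
    (x : ℝ → ℝ) (hx : Measurable x)
    (hx_a : ∀ t, t ≤ a → x t = xa t) (hx_b : ∀ t, b ≤ t → x t = xb t)
    (hcost : (∫⁻ t in Set.Ioc a (b + τ), ENNReal.ofReal ((x t - x (t - τ)) ^ 2)) =
      ∫⁻ t in Set.Ioc a (b + τ), ENNReal.ofReal ((xstar t - xstar (t - τ)) ^ 2)) :
    ∀ᵐ t : ℝ, x t = xstar t := by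
  classical
  have hτ' : τ ≠ 0 := hτ.ne'
  -- basic facts about n
  have hn0 : 0 ≤ n := by
    rw [hn]
    exact Int.floor_nonneg.mpr (div_nonneg (by linarith) hτ.le)
  have hnle : (n : ℝ) * τ ≤ b - a := by
    have h := Int.floor_le ((b - a) / τ)
    rw [← hn] at h
    calc (n : ℝ) * τ ≤ ((b - a) / τ) * τ := by nlinarith
    _ = b - a := div_mul_cancel₀ _ hτ'
  have hnlt : b - a < ((n : ℝ) + 1) * τ := by
    have h := Int.lt_floor_add_one ((b - a) / τ)
    rw [← hn] at h
    calc b - a = ((b - a) / τ) * τ := (div_mul_cancel₀ _ hτ').symm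
    _ < ((n : ℝ) + 1) * τ := by nlinarith
  -- periodicity of u₀
  have hxa_per' : ∀ t, xa (t - τ) = xa t := by
    intro t
    conv_rhs => rw [show t = (t - τ) + τ by ring, hxa_per]
  have hxb_per' : ∀ t, xb (t - τ) = xb t := by
    intro t
    conv_rhs => rw [show t = (t - τ) + τ by ring, hxb_per]
  have hfloor_add : ∀ t : ℝ, ⌊(t + τ - a) / τ⌋ = ⌊(t - a) / τ⌋ + 1 := by
    intro t
    have h : (t + τ - a) / τ = (t - a) / τ + 1 := by field_simp; ring
    rw [h, Int.floor_add_one]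
  have hu₀per : ∀ t, u₀ (t + τ) = u₀ t := by
    intro t
    have hc : (t + τ - a) - τ * ((⌊(t + τ - a) / τ⌋ : ℤ) : ℝ)
        = (t - a) - τ * ((⌊(t - a) / τ⌋ : ℤ) : ℝ) := by
      rw [hfloor_add]; push_cast; ring
    rw [hu₀ (t + τ), hu₀ t, hxa_per, hxb_per, hc]
  have hu₀per' : ∀ t, u₀ (t - τ) = u₀ t := by
    intro t
    conv_rhs => rw [show t = (t - τ) + τ by ring, hu₀per]
  -- the key pointwise identity
  have key : ∀ t, a < t → t < b + τ → t ≠ a + τ → xstar t - xstar (t - τ) = u₀ t := by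
    intro t hta htb hne
    have hne1 : ((n : ℝ) + 1) ≠ 0 := by positivity
    have hne2 : ((n : ℝ) + 2) ≠ 0 := by positivity
    rcases lt_or_gt_of_ne hne with hlt | hgt
    · -- t < a + τ, so t - τ ≤ a
      have h1 : t - τ ≤ a := by linarith
      have hf0 : ⌊(t - a) / τ⌋ = 0 := by
        have h2 : (0 : ℤ) ≤ ⌊(t - a) / τ⌋ :=
          Int.floor_nonneg.mpr (div_nonneg (by linarith) hτ.le)
        have h3 : ⌊(t - a) / τ⌋ < 1 := by
          rw [Int.floor_lt]
          rw [div_lt_iff₀ hτ]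
          push_cast
          linarith
        omega
      rw [hxstar_a _ h1, hxa_per']
      rcases lt_or_ge t b with htb' | hbt
      · rw [hxstar_mid t hta htb', hf0]
        push_cast
        ring
      · -- b ≤ t < a + τ forces n = 0
        have hn0' : n = 0 := by
          have : (n : ℝ) * τ < 1 * τ := by nlinarith
          have : (n : ℝ) < 1 := by nlinarith
          have : n < 1 := by exact_mod_cast this
          omega
        rw [hxstar_b t hbt, hu₀ t, hf0, hn0']
        rw [if_neg (by push_cast; linarith)]
        norm_num
    · -- a + τ < t
      have h2a : a < t - τ := by linarith
      have h2b : t - τ < b := by linarith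
      have hfsub : ⌊(t - τ - a) / τ⌋ = ⌊(t - a) / τ⌋ - 1 := by
        have h : (t - τ - a) / τ = (t - a) / τ - 1 := by field_simp; ring
        rw [h, show ((1 : ℝ)) = ((1 : ℤ) : ℝ) by norm_num, Int.floor_sub_intCast]
      rw [hxstar_mid _ h2a h2b, hxa_per', hfsub, hu₀per']
      rcases lt_or_ge t b with htb' | hbt
      · rw [hxstar_mid t hta htb']
        push_cast
        ring
      · rw [hxstar_b t hbt]
        have hFlb : n ≤ ⌊(t - a) / τ⌋ := by
          rw [Int.le_floor, le_div_iff₀ hτ]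
          linarith
        have hFub : ⌊(t - a) / τ⌋ < n + 2 := by
          rw [Int.floor_lt, div_lt_iff₀ hτ]
          push_cast
          nlinarith
        have hFcase : ⌊(t - a) / τ⌋ = n ∨ ⌊(t - a) / τ⌋ = n + 1 := by omega
        rcases hFcase with hF | hF
        · rw [hF, hu₀ t, hF, if_neg (by push_cast; linarith)]
          push_cast
          field_simp
          ring
        · rw [hF, hu₀ t, hF, if_pos (by push_cast; nlinarith)]
          push_cast
          field_simp
          ring
  -- measurability
  have hfracm : Measurable fun t : ℝ => (t - a) - τ * ((⌊(t - a) / τ⌋ : ℤ) : ℝ) := by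
    have h1 : Measurable fun t : ℝ => ⌊(t - a) / τ⌋ :=
      Int.measurable_floor.comp ((measurable_id.sub_const a).div_const τ)
    exact (measurable_id.sub_const a).sub
      (measurable_const.mul ((measurable_from_top (f := (Int.cast : ℤ → ℝ))).comp h1))
  have hu₀m : Measurable u₀ := by
    have : u₀ = fun t => if (t - a) - τ * ((⌊(t - a) / τ⌋ : ℤ) : ℝ) < b - a - n * τ then
        (xb t - xa t) / ((n : ℝ) + 2)
      else (xb t - xa t) / ((n : ℝ) + 1) := funext hu₀
    rw [this]
    exact Measurable.ite (measurableSet_lt hfracm measurable_const)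
      ((hxb.measurable.sub hxa.measurable).div_const _)
      ((hxb.measurable.sub hxa.measurable).div_const _)
  have hxstarm : Measurable xstar := by
    have : xstar = fun t => if t ≤ a then xa t else if t < b then
        xa t + (1 + ((⌊(t - a) / τ⌋ : ℤ) : ℝ)) * u₀ t else xb t := by
      funext t
      rcases le_or_gt t a with h | h
      · rw [if_pos h, hxstar_a t h]
      rcases lt_or_ge t b with h' | h'
      · rw [if_neg (not_le.mpr h), if_pos h', hxstar_mid t h h']
      · rw [if_neg (not_le.mpr h), if_neg (not_lt.mpr h'), hxstar_b t h']
    rw [this]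
    refine Measurable.ite (measurableSet_le measurable_id measurable_const) hxa.measurable
      (Measurable.ite (measurableSet_lt measurable_id measurable_const)
        (hxa.measurable.add ((measurable_const.add
          ((measurable_from_top (f := (Int.cast : ℤ → ℝ))).comp
            (Int.measurable_floor.comp ((measurable_id.sub_const a).div_const τ)))).mul hu₀m))
        hxb.measurable)
  -- global bound for u₀
  obtain ⟨M, hMu⟩ : ∃ M, ∀ t, |u₀ t| ≤ M := by
    have hper : Function.Periodic (fun t => xb t - xa t) τ := fun t => by
      simp [hxa_per, hxb_per]
    obtain ⟨C, hC⟩ := isBounded_iff_forall_norm_le.mp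
      (hper.compact_of_continuous hτ' (hxb.sub hxa)).isBounded
    refine ⟨C, fun t => ?_⟩
    have hCt : |xb t - xa t| ≤ C := by
      have := hC _ (Set.mem_range_self (f := fun t => xb t - xa t) t)
      simpa [Real.norm_eq_abs] using this
    have h1 : (1 : ℝ) ≤ (n : ℝ) + 1 := by
      have : (0 : ℝ) ≤ (n : ℝ) := by exact_mod_cast hn0
      linarith
    have h2 : (1 : ℝ) ≤ (n : ℝ) + 2 := by linarith
    rw [hu₀ t]
    split_ifs
    · rw [abs_div, abs_of_nonneg (show (0:ℝ) ≤ (n:ℝ) + 2 by linarith)]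
      exact le_trans (div_le_self (abs_nonneg _) h2) hCt
    · rw [abs_div, abs_of_nonneg (show (0:ℝ) ≤ (n:ℝ) + 1 by linarith)]
      exact le_trans (div_le_self (abs_nonneg _) h1) hCt
  -- setup
  set I : Set ℝ := Set.Ioc a (b + τ) with hIdef
  have hImeas : MeasurableSet I := measurableSet_Ioc
  have hIfin : volume I ≠ ⊤ := (measure_Ioc_lt_top).ne
  haveI : IsFiniteMeasure (volume.restrict I) :=
    ⟨by rw [Measure.restrict_apply_univ]; exact measure_Ioc_lt_top⟩
  set e : ℝ → ℝ := fun t => (x t - xstar t) - (x (t - τ) - xstar (t - τ)) with hedef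
  have hem : Measurable e := (hx.sub hxstarm).sub
    ((hx.sub hxstarm).comp (measurable_id.sub_const τ))
  have hy_a : ∀ t, t ≤ a → x t - xstar t = 0 := fun t ht => by
    rw [hx_a t ht, hxstar_a t ht, sub_self]
  have hy_b : ∀ t, b ≤ t → x t - xstar t = 0 := fun t ht => by
    rw [hx_b t ht, hxstar_b t ht, sub_self]
  have he0 : ∀ t, t ∉ I → e t = 0 := by
    intro t ht
    rw [hIdef, Set.mem_Ioc, not_and_or, not_lt, not_le] at ht
    rcases ht with ht | ht
    · rw [hedef]
      simp only
      rw [hy_a t ht, hy_a (t - τ) (by linarith), sub_self]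
    · rw [hedef]
      simp only
      rw [hy_b t (by linarith), hy_b (t - τ) (by linarith), sub_self]
  -- a.e. identity for xstar differences on I
  have hne_ae : ∀ c : ℝ, ∀ᵐ t : ℝ, t ≠ c := by
    intro c
    rw [ae_iff]
    have : {t : ℝ | ¬t ≠ c} = {c} := by ext t; simp
    rw [this]
    exact measure_singleton c
  have hfs_ae : ∀ᵐ t ∂(volume.restrict I), xstar t - xstar (t - τ) = u₀ t := by
    rw [ae_restrict_iff' hImeas]
    filter_upwards [hne_ae (a + τ), hne_ae (b + τ)] with t h1 h2 hmem
    rw [hIdef, Set.mem_Ioc] at hmem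
    exact key t hmem.1 (lt_of_le_of_ne hmem.2 h2) h1
  -- integrability facts
  have hfm : Measurable fun t => x t - x (t - τ) :=
    hx.sub (hx.comp (measurable_id.sub_const τ))
  have hu₀2lt : ∫⁻ t in I, ENNReal.ofReal (u₀ t ^ 2) < ⊤ := by
    calc ∫⁻ t in I, ENNReal.ofReal (u₀ t ^ 2)
        ≤ ∫⁻ _ in I, ENNReal.ofReal (M ^ 2) := by
          refine lintegral_mono fun t => ENNReal.ofReal_le_ofReal ?_
          have := hMu t
          nlinarith [abs_nonneg (u₀ t), sq_abs (u₀ t)]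
      _ = ENNReal.ofReal (M ^ 2) * volume I := setLIntegral_const I _
      _ < ⊤ := ENNReal.mul_lt_top ENNReal.ofReal_lt_top hIfin.lt_top
  have hlint_eq : ∫⁻ t in I, ENNReal.ofReal ((x t - x (t - τ)) ^ 2)
      = ∫⁻ t in I, ENNReal.ofReal (u₀ t ^ 2) := by
    rw [hcost]
    exact lintegral_congr_ae (hfs_ae.mono fun t ht => by dsimp only; rw [ht])
  have hf2int : Integrable (fun t => (x t - x (t - τ)) ^ 2) (volume.restrict I) := by
    refine ⟨(hfm.pow_const 2).aestronglyMeasurable, ?_⟩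
    rw [hasFiniteIntegral_iff_ofReal (Filter.Eventually.of_forall fun t => sq_nonneg _)]
    rw [hlint_eq]
    exact hu₀2lt
  have hfint : Integrable (fun t => x t - x (t - τ)) (volume.restrict I) := by
    refine Integrable.mono' ((integrable_const 1).add hf2int) hfm.aestronglyMeasurable
      (Filter.Eventually.of_forall fun t => ?_)
    simp only [Pi.add_apply, Real.norm_eq_abs]
    nlinarith [sq_nonneg (|x t - x (t - τ)| - 1), sq_abs (x t - x (t - τ)),
      abs_nonneg (x t - x (t - τ))]
  have hu₀int : Integrable u₀ (volume.restrict I) :=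
    Integrable.mono' (integrable_const M) hu₀m.aestronglyMeasurable
      (Filter.Eventually.of_forall fun t => by rw [Real.norm_eq_abs]; exact hMu t)
  have heI : Integrable e (volume.restrict I) := by
    refine (hfint.sub hu₀int).congr ?_
    filter_upwards [hfs_ae] with t ht
    have h : e t = (x t - x (t - τ)) - (xstar t - xstar (t - τ)) := by
      simp only [hedef]; ring
    rw [h, ht]
    simp only [Pi.sub_apply]
  have he_glob : Integrable e volume := by
    have h : e = I.indicator e := by
      funext t
      by_cases h : t ∈ I
      · rw [Set.indicator_of_mem h]
      · rw [Set.indicator_of_notMem h, he0 t h]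
    rw [h]
    exact (MeasureTheory.IntegrableOn.integrable_indicator heI hImeas)
  -- telescoping
  set N : ℕ := n.toNat + 1 with hNdef
  have hNcast : ((N : ℝ)) = (n : ℝ) + 1 := by
    have h0 : ((n.toNat : ℝ)) = (n : ℝ) := by exact_mod_cast Int.toNat_of_nonneg hn0
    rw [hNdef]
    push_cast
    rw [h0]
  have htel : ∀ t, t ≤ b → x t - xstar t = ∑ k ∈ Finset.range N, e (t - (k : ℝ) * τ) := by
    intro t htb
    have h1 : ∀ k : ℕ, e (t - (k : ℝ) * τ)
        = (x (t - (k : ℝ) * τ) - xstar (t - (k : ℝ) * τ))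
          - (x (t - ((k + 1 : ℕ) : ℝ) * τ) - xstar (t - ((k + 1 : ℕ) : ℝ) * τ)) := by
      intro k
      have h2 : t - ((k + 1 : ℕ) : ℝ) * τ = t - (k : ℝ) * τ - τ := by push_cast; ring
      rw [h2]
    have h4 := Finset.sum_range_sub' (fun k : ℕ => x (t - (k : ℝ) * τ) - xstar (t - (k : ℝ) * τ)) N
    rw [Finset.sum_congr rfl fun k _ => h1 k, h4]
    have h3 : t - (N : ℝ) * τ ≤ a := by rw [hNcast]; nlinarith
    rw [hy_a _ h3]
    norm_num
  set g : ℝ → ℝ := fun t => ∑ k ∈ Finset.range N, e (t - (k : ℝ) * τ) with hgdef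
  have hg : Integrable g volume := by
    rw [hgdef]
    exact integrable_finset_sum _ fun k _ => he_glob.comp_sub_right ((k : ℝ) * τ)
  have hu₀bdd : ∃ C, ∀ t, ‖u₀ t‖ ≤ C := ⟨M, fun t => by rw [Real.norm_eq_abs]; exact hMu t⟩
  have hA : Integrable (fun t => u₀ t * (x t - xstar t)) volume := by
    have h1 : Integrable (fun t => u₀ t * g t) volume :=
      hg.bdd_mul hu₀m.aestronglyMeasurable
        (Filter.Eventually.of_forall fun t => by rw [Real.norm_eq_abs]; exact hMu t)
    have h2 : (fun t => u₀ t * (x t - xstar t))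
        = (Set.Ioc a b).indicator (fun t => u₀ t * g t) := by
      funext t
      by_cases h : t ∈ Set.Ioc a b
      · rw [Set.indicator_of_mem h, htel t h.2]
      · rw [Set.indicator_of_notMem h]
        rw [Set.mem_Ioc, not_and_or, not_lt, not_le] at h
        rcases h with h | h
        · rw [hy_a t h, mul_zero]
        · rw [hy_b t h.le, mul_zero]
    rw [h2]
    exact h1.indicator measurableSet_Ioc
  have hB : Integrable (fun t => u₀ t * (x (t - τ) - xstar (t - τ))) volume := by
    have h1 : Integrable (fun t => u₀ t * g (t - τ)) volume :=
      (hg.comp_sub_right τ).bdd_mul hu₀m.aestronglyMeasurable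
        (Filter.Eventually.of_forall fun t => by rw [Real.norm_eq_abs]; exact hMu t)
    have h2 : (fun t => u₀ t * (x (t - τ) - xstar (t - τ)))
        = (Set.Ioc (a + τ) (b + τ)).indicator (fun t => u₀ t * g (t - τ)) := by
      funext t
      by_cases h : t ∈ Set.Ioc (a + τ) (b + τ)
      · rw [Set.mem_Ioc] at h
        rw [Set.indicator_of_mem (by rw [Set.mem_Ioc]; exact h), htel (t - τ) (by linarith)]
      · rw [Set.indicator_of_notMem h]
        rw [Set.mem_Ioc, not_and_or, not_lt, not_le] at h
        rcases h with h | h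
        · rw [hy_a (t - τ) (by linarith), mul_zero]
        · rw [hy_b (t - τ) (by linarith), mul_zero]
    rw [h2]
    exact h1.indicator measurableSet_Ioc
  have hshift_int : ∫ t, u₀ t * (x (t - τ) - xstar (t - τ)) = ∫ t, u₀ t * (x t - xstar t) := by
    have h1 : (fun t => u₀ t * (x (t - τ) - xstar (t - τ)))
        = fun t => (fun s => u₀ (s + τ) * (x s - xstar s)) (t - τ) := by
      funext t
      simp only [sub_add_cancel]
    rw [h1, integral_sub_right_eq_self (fun s => u₀ (s + τ) * (x s - xstar s)) τ]
    simp_rw [hu₀per]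
  have hAv : ∀ t, t ∉ I → u₀ t * (x t - xstar t) = 0 := by
    intro t ht
    rw [hIdef, Set.mem_Ioc, not_and_or, not_lt, not_le] at ht
    rcases ht with ht | ht
    · rw [hy_a t ht, mul_zero]
    · rw [hy_b t (by linarith), mul_zero]
  have hBv : ∀ t, t ∉ I → u₀ t * (x (t - τ) - xstar (t - τ)) = 0 := by
    intro t ht
    rw [hIdef, Set.mem_Ioc, not_and_or, not_lt, not_le] at ht
    rcases ht with ht | ht
    · rw [hy_a (t - τ) (by linarith), mul_zero]
    · rw [hy_b (t - τ) (by linarith), mul_zero]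
  have hcrossI : ∫ t in I, u₀ t * ((x t - x (t - τ)) - u₀ t) = 0 := by
    have h1 : ∫ t in I, u₀ t * ((x t - x (t - τ)) - u₀ t)
        = ∫ t in I, (u₀ t * (x t - xstar t) - u₀ t * (x (t - τ) - xstar (t - τ))) := by
      refine integral_congr_ae ?_
      filter_upwards [hfs_ae] with t ht
      rw [← ht]
      ring
    rw [h1, integral_sub hA.integrableOn hB.integrableOn,
      setIntegral_eq_integral_of_forall_compl_eq_zero hAv,
      setIntegral_eq_integral_of_forall_compl_eq_zero hBv, hshift_int, sub_self]
  -- conclusion via the L² lemma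
  have hmain : (fun t => x t - x (t - τ)) =ᵐ[volume.restrict I] u₀ :=
    l2_ae_eq hfm hu₀m hMu hlint_eq hcrossI
  have he_ae : ∀ᵐ t ∂(volume.restrict I), e t = 0 := by
    filter_upwards [hmain, hfs_ae] with t h1 h2
    have h1' : x t - x (t - τ) = u₀ t := h1
    have h3 : e t = (x t - x (t - τ)) - (xstar t - xstar (t - τ)) := by
      simp only [hedef]; ring
    rw [h3, h1', h2, sub_self]
  have he_glob0 : ∀ᵐ t : ℝ, e t = 0 := by
    have h := (ae_restrict_iff' hImeas).mp he_ae
    filter_upwards [h] with t ht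
    by_cases hmem : t ∈ I
    · exact ht hmem
    · exact he0 t hmem
  have hshift0 : ∀ k : ℕ, ∀ᵐ t : ℝ, e (t - (k : ℝ) * τ) = 0 := by
    intro k
    have hqmp := (measurePreserving_sub_right volume ((k : ℝ) * τ)).quasiMeasurePreserving
    have h0 : e =ᵐ[volume] (fun _ => (0 : ℝ)) := he_glob0
    have h1 := hqmp.ae_eq_comp h0
    filter_upwards [h1] with t ht
    simpa using ht
  have hall : ∀ᵐ t : ℝ, ∀ k : ℕ, e (t - (k : ℝ) * τ) = 0 := ae_all_iff.mpr hshift0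
  filter_upwards [hall] with t ht
  rcases le_or_gt t b with htb | htb
  · have h1 := htel t htb
    rw [Finset.sum_eq_zero fun k _ => ht k] at h1
    linarith
  · have h2 := hy_b t htb.le
    linarith
end
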